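/- arXiv:math/0501515 — 3 statements merged into one kernel-verified Lean document; each statement's English description precedes it below -/
import Mathlib

section
/- Let (c_p) be a sequence of integers indexed by the primes with c₂ ≡ 1 (mod 2) and c_p ≡ 0 (mod p) for all primes p > 2. Then the family S((c_p)) given by ψ_p(x) = c_p x² is a filtered λ-ring structure on ℤ[x]/(x³). Moreover, for two such sequences (c_p) and (c'_p), the structures S((c_p)) and S((c'_p)) are isomorphic if and only if c_p = c'_p for all primes p or c_p = −c'_p for all primes p. -/
open Polynomial

noncomputable section

/-- The truncated polynomial ring `ℤ[x]/(xⁿ)`. -/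
abbrev TP (n : ℕ) : Type := Polynomial ℤ ⧸ Ideal.span {(X : Polynomial ℤ) ^ n}

/-- The class of `x` in `ℤ[x]/(xⁿ)`. -/
def xx (n : ℕ) : TP n := Ideal.Quotient.mk _ (X : Polynomial ℤ)

/-- A filtered λ-ring structure on `ℤ[x]/(xⁿ)`, presented (via Wilkerson's theorem) as a
family of Adams operations `ψ p`, indexed by the primes `p`: each `ψ p` is a ring
endomorphism preserving the filtration ideal `(x)`, they pairwise commute, and
`ψ p r ≡ r ^ p (mod p)`. -/
structure AdamsFamily (n : ℕ) : Type where
  ψ : Nat.Primes → (TP n →+* TP n)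
  maps_ideal : ∀ (p : Nat.Primes), ∀ a ∈ Ideal.span {xx n}, ψ p a ∈ Ideal.span {xx n}
  comm : ∀ p q : Nat.Primes, (ψ p).comp (ψ q) = (ψ q).comp (ψ p)
  frob : ∀ (p : Nat.Primes) (a : TP n),
    ψ p a - a ^ (p : ℕ) ∈ Ideal.span {((p : ℕ) : TP n)}

/-- Isomorphism of filtered λ-ring structures on `ℤ[x]/(xⁿ)`: a filtration-preserving ring
automorphism intertwining the Adams operations. -/
def AdamsIso {n : ℕ} (R S : AdamsFamily n) : Prop :=
  ∃ σ : TP n ≃+* TP n,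
    (Ideal.span {xx n}).map σ.toRingHom = Ideal.span {xx n} ∧
    ∀ p : Nat.Primes, σ.toRingHom.comp (R.ψ p) = (S.ψ p).comp σ.toRingHom

/-- The prime 2 as an element of `Nat.Primes`. -/
def P2 : Nat.Primes := ⟨2, Nat.prime_two⟩

/-- The prime 3 as an element of `Nat.Primes`. -/
def P3 : Nat.Primes := ⟨3, Nat.prime_three⟩

lemma coeff_cast (a : ℤ) (n : ℕ) : ((a : ℤ[X])).coeff n = if n = 0 then a else 0 := by
  rw [← Polynomial.C_eq_intCast, Polynomial.coeff_C]; simp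

lemma xx_cube : (xx 3) ^ 3 = 0 := by
  rw [xx, ← map_pow, Ideal.Quotient.eq_zero_iff_mem]
  exact Ideal.subset_span rfl

lemma tp_hom_ext {S : Type} [Ring S] {f g : TP 3 →+* S} (h : f (xx 3) = g (xx 3)) :
    f = g := by
  refine Ideal.Quotient.ringHom_ext (Polynomial.ringHom_ext' ?_ h)
  ext n
  simp [map_intCast]

lemma mk_eq (a : ℤ) :
    (Ideal.Quotient.mk (Ideal.span {(X : Polynomial ℤ) ^ 3}) (C a)) = (a : TP 3) :=
  RingHom.congr_fun
    (Subsingleton.elim ((Ideal.Quotient.mk (Ideal.span {(X : Polynomial ℤ) ^ 3})).comp C)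
      (Int.castRingHom (TP 3))) a

lemma tp_repr (z : TP 3) : ∃ a b c : ℤ, z = (a : TP 3) + (b : TP 3) * xx 3 + (c : TP 3) * xx 3 ^ 2 := by
  obtain ⟨f, rfl⟩ := Ideal.Quotient.mk_surjective z
  refine ⟨f.coeff 0, f.coeff 1, f.coeff 2, ?_⟩
  have h : Ideal.Quotient.mk (Ideal.span {(X : Polynomial ℤ) ^ 3})
      (C (f.coeff 0) + C (f.coeff 1) * X + C (f.coeff 2) * X ^ 2) =
      ((f.coeff 0 : TP 3)) + (f.coeff 1 : TP 3) * xx 3 + (f.coeff 2 : TP 3) * xx 3 ^ 2 := by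
    simp only [map_add, map_mul, map_pow, mk_eq, xx]
  rw [← h, Ideal.Quotient.eq, Ideal.mem_span_singleton, X_pow_dvd_iff]
  intro d hd
  interval_cases d <;> simp [coeff_cast]

lemma tp_coeffs {a b c : ℤ}
    (h : (a : TP 3) + (b : TP 3) * xx 3 + (c : TP 3) * xx 3 ^ 2 = 0) :
    a = 0 ∧ b = 0 ∧ c = 0 := by
  have h2 : Ideal.Quotient.mk (Ideal.span {(X : Polynomial ℤ) ^ 3})
      (C a + C b * X + C c * X ^ 2) = 0 := by
    simp only [map_add, map_mul, map_pow, mk_eq]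
    exact h
  rw [Ideal.Quotient.eq_zero_iff_mem, Ideal.mem_span_singleton, X_pow_dvd_iff] at h2
  refine ⟨?_, ?_, ?_⟩
  · have := h2 0 (by norm_num); simpa [coeff_cast] using this
  · have := h2 1 (by norm_num); simpa [coeff_cast] using this
  · have := h2 2 (by norm_num); simpa [coeff_cast] using this

/-- The endomorphism of `TP 3` sending `x` to `t`, for `t` with `t ^ 3 = 0`. -/
def psiHom (t : TP 3) (ht : t ^ 3 = 0) : TP 3 →+* TP 3 :=
  Ideal.Quotient.lift _ ((aeval t : Polynomial ℤ →ₐ[ℤ] TP 3) : Polynomial ℤ →+* TP 3)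
    (by
      intro f hf
      rw [Ideal.mem_span_singleton] at hf
      obtain ⟨g, rfl⟩ := hf
      simp [ht])

@[simp] lemma psiHom_x (t : TP 3) (ht : t ^ 3 = 0) : psiHom t ht (xx 3) = t := by
  simp [psiHom, xx]

/-- Constant-term ring hom `TP 3 →+* ℤ`. -/
def eps : TP 3 →+* ℤ :=
  Ideal.Quotient.lift _ (evalRingHom 0)
    (by
      intro f hf
      rw [Ideal.mem_span_singleton] at hf
      obtain ⟨g, rfl⟩ := hf
      simp)

@[simp] lemma eps_x : eps (xx 3) = 0 := by simp [eps, xx]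

set_option synthInstance.maxHeartbeats 1000000 in
lemma charP_Q (p : ℕ) (hp : p.Prime) :
    CharP (TP 3 ⧸ Ideal.span {(p : TP 3)}) p := by
  refine ⟨fun n => ⟨?_, ?_⟩⟩
  · intro hn
    have : ((n : TP 3)) ∈ Ideal.span {(p : TP 3)} := by
      rwa [← map_natCast (Ideal.Quotient.mk (Ideal.span {(p : TP 3)})),
        Ideal.Quotient.eq_zero_iff_mem] at hn
    rw [Ideal.mem_span_singleton] at this
    obtain ⟨w, hw⟩ := this
    have : (p : ℤ) ∣ (n : ℤ) := ⟨eps w, by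
      have := congrArg eps hw
      simpa using this⟩
    exact_mod_cast this
  · rintro ⟨k, rfl⟩
    have : ((p * k : ℕ) : TP 3) ∈ Ideal.span {(p : TP 3)} := by
      rw [Ideal.mem_span_singleton]
      exact ⟨k, by push_cast; ring⟩
    rw [← Ideal.Quotient.eq_zero_iff_mem] at this
    rwa [map_natCast] at this

lemma t_cube (m : ℤ) : ((m : TP 3) * xx 3 ^ 2) ^ 3 = 0 := by
  rw [mul_pow, ← pow_mul]
  rw [show (2 * 3 : ℕ) = 3 + 3 from rfl, pow_add, xx_cube]
  ring

lemma t_sq (m : ℤ) : ((m : TP 3) * xx 3 ^ 2) ^ 2 = 0 := by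
  rw [mul_pow, ← pow_mul]
  rw [show (2 * 2 : ℕ) = 3 + 1 from rfl, pow_add, xx_cube]
  ring

set_option synthInstance.maxHeartbeats 1000000 in
def Sfam (c : Nat.Primes → ℤ) (hc2 : Int.ModEq 2 (c P2) 1)
    (hcp : ∀ p : Nat.Primes, 2 < (p : ℕ) → ((p : ℕ) : ℤ) ∣ c p) : AdamsFamily 3 where
  ψ p := psiHom ((c p : TP 3) * xx 3 ^ 2) (t_cube _)
  maps_ideal := by
    intro p a ha
    rw [Ideal.mem_span_singleton] at ha ⊢
    obtain ⟨w, rfl⟩ := ha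
    refine ⟨(c p : TP 3) * xx 3 * psiHom _ (t_cube (c p)) w, ?_⟩
    rw [map_mul, psiHom_x]
    ring
  comm := by
    intro p q
    apply tp_hom_ext
    simp only [RingHom.comp_apply, psiHom_x, map_mul, map_intCast, map_pow, t_sq,
      mul_zero]
  frob := by
    intro p a
    have hp : Fact (Nat.Prime (p : ℕ)) := ⟨p.2⟩
    haveI := charP_Q (p : ℕ) p.2
    set I : Ideal (TP 3) := Ideal.span {((p : ℕ) : TP 3)} with hI
    set π : TP 3 →+* TP 3 ⧸ I := Ideal.Quotient.mk I with hπ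
    have key : (c p : TP 3) * xx 3 ^ 2 - xx 3 ^ (p : ℕ) ∈ I := by
      rcases eq_or_lt_of_le p.2.two_le with h2 | h2
      · -- p = 2
        have hp2 : p = P2 := Subtype.ext h2.symm
        subst hp2
        obtain ⟨k, hk⟩ := (Int.ModEq.dvd hc2 : (2 : ℤ) ∣ 1 - c P2)
        rw [Ideal.mem_span_singleton]
        refine ⟨(-k : ℤ) * xx 3 ^ 2, ?_⟩
        have : (c P2 : TP 3) - 1 = ((2 : ℤ) : TP 3) * (-k : ℤ) := by
          have : (c P2 - 1 : ℤ) = 2 * (-k) := by linarith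
          calc (c P2 : TP 3) - 1 = ((c P2 - 1 : ℤ) : TP 3) := by push_cast; ring
            _ = ((2 * (-k) : ℤ) : TP 3) := by rw [this]
            _ = ((2 : ℤ) : TP 3) * (-k : ℤ) := by push_cast; ring
        show (c P2 : TP 3) * xx 3 ^ 2 - xx 3 ^ ((P2 : ℕ)) = _
        have h2n : ((P2 : ℕ)) = 2 := rfl
        rw [h2n]
        calc (c P2 : TP 3) * xx 3 ^ 2 - xx 3 ^ 2 = ((c P2 : TP 3) - 1) * xx 3 ^ 2 := by ring
          _ = (((2:ℕ) : TP 3)) * ((-k : ℤ) * xx 3 ^ 2) := by rw [this]; push_cast; ring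
          _ = (((P2 : ℕ) : TP 3)) * ((-k : ℤ) * xx 3 ^ 2) := by rw [h2n]
      · -- p > 2
        obtain ⟨k, hk⟩ := hcp p h2
        have h3 : 3 ≤ (p : ℕ) := h2
        have hx : xx 3 ^ (p : ℕ) = 0 := by
          rw [← Nat.add_sub_cancel' h3, pow_add, xx_cube, zero_mul]
        rw [hx, sub_zero, Ideal.mem_span_singleton]
        refine ⟨(k : TP 3) * xx 3 ^ 2, ?_⟩
        rw [show (c p : TP 3) = (((p:ℕ):ℤ) * k : ℤ) by rw [← hk]]
        push_cast
        ring
    have claim : π.comp (psiHom ((c p : TP 3) * xx 3 ^ 2) (t_cube _)) =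
        (frobenius (TP 3 ⧸ I) (p : ℕ)).comp π := by
      apply tp_hom_ext
      simp only [RingHom.comp_apply, psiHom_x, frobenius_def]
      rw [← map_pow]
      rw [← sub_eq_zero, ← map_sub, Ideal.Quotient.eq_zero_iff_mem]
      exact key
    have := RingHom.congr_fun claim a
    simp only [RingHom.comp_apply, frobenius_def] at this
    rw [← Ideal.Quotient.eq_zero_iff_mem, map_sub, this, map_pow]
    exact sub_self _

lemma xx_four : xx 3 ^ 4 = 0 := by
  rw [show (4:ℕ) = 3+1 from rfl, pow_add, xx_cube, zero_mul]

lemma sq_lin (a b : ℤ) :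
    ((a : TP 3) * xx 3 + (b : TP 3) * xx 3 ^ 2) ^ 2 = ((a^2 : ℤ) : TP 3) * xx 3 ^ 2 := by
  have h3 := xx_cube
  have h4 := xx_four
  push_cast
  linear_combination (2*(a:TP 3)*(b:TP 3) + (b:TP 3)^2 * xx 3) * h3 + 0 * h4

lemma mem_repr (z : TP 3) (hz : z ∈ Ideal.span {xx 3}) :
    ∃ a b : ℤ, z = (a : TP 3) * xx 3 + (b : TP 3) * xx 3 ^ 2 := by
  rw [Ideal.mem_span_singleton] at hz
  obtain ⟨w, rfl⟩ := hz
  obtain ⟨a, b, c, rfl⟩ := tp_repr w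
  refine ⟨a, b, ?_⟩
  have h3 := xx_cube
  ring_nf
  linear_combination (c : TP 3) * h3


lemma neg_x_cube : (-(xx 3)) ^ 3 = 0 := by linear_combination (-1 : TP 3) * xx_cube

/-- The negation automorphism `x ↦ -x`. -/
def negE : TP 3 ≃+* TP 3 :=
  RingEquiv.ofRingHom (psiHom (-(xx 3)) neg_x_cube) (psiHom (-(xx 3)) neg_x_cube)
    (tp_hom_ext (by simp)) (tp_hom_ext (by simp))

lemma negE_x : negE.toRingHom (xx 3) = -(xx 3) := by
  have h : negE.toRingHom = psiHom (-(xx 3)) neg_x_cube := by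
    rfl
  rw [h, psiHom_x]

lemma psi_apply_lin (T : AdamsFamily 3) (p : Nat.Primes) (d : ℤ)
    (hT : T.ψ p (xx 3) = (d : TP 3) * xx 3 ^ 2) (a b : ℤ) :
    T.ψ p ((a : TP 3) * xx 3 + (b : TP 3) * xx 3 ^ 2) = ((a * d : ℤ) : TP 3) * xx 3 ^ 2 := by
  rw [map_add, map_mul, map_mul, map_intCast, map_intCast, map_pow, hT, t_sq]
  push_cast
  ring

theorem iso_iff (c c' : Nat.Primes → ℤ) (S S' : AdamsFamily 3)
    (hS : ∀ p : Nat.Primes, S.ψ p (xx 3) = (c p : TP 3) * xx 3 ^ 2)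
    (hS' : ∀ p : Nat.Primes, S'.ψ p (xx 3) = (c' p : TP 3) * xx 3 ^ 2) :
    AdamsIso S S' ↔
      (∀ p : Nat.Primes, c p = c' p) ∨ (∀ p : Nat.Primes, c p = -c' p) := by
  constructor
  · rintro ⟨σ, hσI, hσψ⟩
    have hxmem : σ (xx 3) ∈ Ideal.span {xx 3} := by
      rw [← hσI]
      exact Ideal.mem_map_of_mem _ (Ideal.subset_span rfl)
    have hsymmI : (Ideal.span {xx 3}).map σ.symm.toRingHom = Ideal.span {xx 3} := by
      conv_lhs => rw [← hσI]
      rw [Ideal.map_map, RingEquiv.symm_toRingHom_comp_toRingHom, Ideal.map_id]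
    have hxmem' : σ.symm (xx 3) ∈ Ideal.span {xx 3} := by
      rw [← hsymmI]
      exact Ideal.mem_map_of_mem _ (Ideal.subset_span rfl)
    obtain ⟨a, b, hab0⟩ := mem_repr _ hxmem
    obtain ⟨a', b', hab0'⟩ := mem_repr _ hxmem'
    have hab : σ.toRingHom (xx 3) = (a : TP 3) * xx 3 + (b : TP 3) * xx 3 ^ 2 := hab0
    have hab' : σ.symm.toRingHom (xx 3) = (a' : TP 3) * xx 3 + (b' : TP 3) * xx 3 ^ 2 := hab0'
    have hx : xx 3 = (↑(a' * a) : TP 3) * xx 3 + (↑(a' * b + b' * a ^ 2) : TP 3) * xx 3 ^ 2 := by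
      conv_lhs => rw [← σ.apply_symm_apply (xx 3)]
      show σ.toRingHom (σ.symm.toRingHom (xx 3)) = _
      rw [hab', map_add, map_mul, map_mul, map_intCast, map_intCast, map_pow, hab, sq_lin]
      push_cast
      ring
    have h1 : a' * a = 1 := by
      have h0 : ((0:ℤ) : TP 3) + (↑(a' * a - 1) : TP 3) * xx 3
          + (↑(a' * b + b' * a ^ 2) : TP 3) * xx 3 ^ 2 = 0 := by
        push_cast
        push_cast at hx
        linear_combination -hx
      have := (tp_coeffs h0).2.1
      linarith
    have key : ∀ p : Nat.Primes, c p * a ^ 2 = a * c' p := by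
      intro p
      have h := RingHom.congr_fun (hσψ p) (xx 3)
      simp only [RingHom.comp_apply] at h
      rw [hS p] at h
      rw [map_mul, map_intCast, map_pow, hab, sq_lin] at h
      rw [psi_apply_lin S' p (c' p) (hS' p) a b] at h
      have h0 : ((0:ℤ) : TP 3) + (↑(0:ℤ) : TP 3) * xx 3
          + (↑(c p * a ^ 2 - a * c' p) : TP 3) * xx 3 ^ 2 = 0 := by
        push_cast
        push_cast at h
        linear_combination h
      have := (tp_coeffs h0).2.2
      linarith
    rcases Int.isUnit_iff.mp ((isUnit_iff_exists_inv (a := a)).mpr ⟨a', by linarith [h1]⟩) with ha | ha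
    · left
      intro p
      have := key p
      rw [ha] at this
      linarith
    · right
      intro p
      have := key p
      rw [ha] at this
      linarith
  · rintro (h | h)
    · refine ⟨RingEquiv.refl _, ?_, ?_⟩
      · simp [Ideal.map_id]
      · intro p
        have : S.ψ p = S'.ψ p := tp_hom_ext (by rw [hS p, hS' p, h p])
        simp [this]
    · refine ⟨negE, ?_, ?_⟩
      · rw [Ideal.map_span, Set.image_singleton, negE_x, Ideal.span_singleton_neg]
      · intro p
        apply tp_hom_ext
        simp only [RingHom.comp_apply]
        rw [hS p, map_mul, map_intCast, map_pow, negE_x, map_neg, hS' p, h p]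
        push_cast
        ring

theorem stmt5 (c c' : Nat.Primes → ℤ)
    (hc2 : Int.ModEq 2 (c P2) 1)
    (hcp : ∀ p : Nat.Primes, 2 < (p : ℕ) → ((p : ℕ) : ℤ) ∣ c p)
    (hc2' : Int.ModEq 2 (c' P2) 1)
    (hcp' : ∀ p : Nat.Primes, 2 < (p : ℕ) → ((p : ℕ) : ℤ) ∣ c' p) :
    (∃ S : AdamsFamily 3, ∀ p : Nat.Primes, S.ψ p (xx 3) = (c p : TP 3) * xx 3 ^ 2) ∧
    (∀ S S' : AdamsFamily 3,
      (∀ p : Nat.Primes, S.ψ p (xx 3) = (c p : TP 3) * xx 3 ^ 2) →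
      (∀ p : Nat.Primes, S'.ψ p (xx 3) = (c' p : TP 3) * xx 3 ^ 2) →
      (AdamsIso S S' ↔
        (∀ p : Nat.Primes, c p = c' p) ∨ (∀ p : Nat.Primes, c p = -c' p))) := by
  constructor
  · exact ⟨Sfam c hc2 hcp, fun p => psiHom_x _ (t_cube _)⟩
  · intro S S' hS hS'
    exact iso_iff c c' S S' hS hS'
end
end

section
/- Let (b_p) be a sequence of integers indexed by the primes satisfying condition (A), let G be the gcd of {b_p(b_p − 1) : p prime}, and let k be an odd integer with 1 ≤ k ≤ G/2 that is divisible by every condition-(B) prime for (b_p); set c_p = k·b_p(b_p − 1)/G for each prime p. Then: (i) the set of condition-(B) primes for (b_p) is finite, and each such prime divides b₂(b₂ − 1); (ii) each c_p is an integer and the family S((b_p), k) given by ψ_p(x) = b_p x + c_p x² is a filtered λ-ring structure on ℤ[x]/(x³); (iii) two such structures S((b_p), k) and S((b'_p), k') are isomorphic if and only if b_p = b'_p for all primes p and k = k'; (iv) no structure S((b_p), k) is isomorphic to any structure S((c_p)) of the form ψ_p(x) = c_p x² (with c₂ odd and p ∣ c_p for p > 2). -/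
open Polynomial

noncomputable section

/-- Condition (A) for a sequence of integers indexed by the primes. -/
def CondA (b : Nat.Primes → ℤ) : Prop :=
  b P2 ≠ 0 ∧ (∀ p : Nat.Primes, ((p : ℕ) : ℤ) ∣ b p) ∧
    ∀ p : Nat.Primes, 2 < (p : ℕ) →
      (2 : ℤ) ^ padicValInt 2 (b P2) ∣ b p * (b p - 1)

/-- `p` is a condition-(B) prime for the sequence `b`. -/
def CondBPrime (b : Nat.Primes → ℤ) (p : Nat.Primes) : Prop :=
  2 < (p : ℕ) ∧ b p ≠ 0 ∧
    padicValInt (p : ℕ) (b p) =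
      sInf {m : ℕ | ∃ q : Nat.Primes, b q ≠ 0 ∧ m = padicValInt (p : ℕ) (b q * (b q - 1))}

namespace Aux

lemma x3 : (xx 3) ^ 3 = 0 := by
  rw [xx, ← map_pow, Ideal.Quotient.eq_zero_iff_mem]
  exact Ideal.subset_span rfl

lemma x4 : (xx 3) ^ 4 = 0 := by
  rw [show (4:ℕ) = 3+1 by rfl, pow_succ, x3, zero_mul]

lemma repr3 (t : TP 3) : ∃ a₀ a₁ a₂ : ℤ,
    t = (a₀ : TP 3) + (a₁ : TP 3) * xx 3 + (a₂ : TP 3) * xx 3 ^ 2 := by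
  obtain ⟨f, rfl⟩ := Ideal.Quotient.mk_surjective t
  refine ⟨f.coeff 0, f.coeff 1, f.coeff 2, ?_⟩
  have : Ideal.Quotient.mk (Ideal.span {(X : Polynomial ℤ) ^ 3})
      (f - (C (f.coeff 0) + C (f.coeff 1) * X + C (f.coeff 2) * X ^ 2)) = 0 := by
    rw [Ideal.Quotient.eq_zero_iff_mem, Ideal.mem_span_singleton]
    rw [X_pow_dvd_iff]
    intro d hd
    interval_cases d <;>
      simp only [coeff_sub, coeff_add, coeff_C_mul, coeff_C, coeff_X, coeff_X_pow] <;>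
      norm_num
  rw [map_sub, sub_eq_zero] at this
  rw [this, map_add, map_add, map_mul, map_mul, map_pow]
  simp [xx, map_intCast]

lemma zero3 {a₀ a₁ a₂ : ℤ}
    (h : (a₀ : TP 3) + (a₁ : TP 3) * xx 3 + (a₂ : TP 3) * xx 3 ^ 2 = 0) :
    a₀ = 0 ∧ a₁ = 0 ∧ a₂ = 0 := by
  have h' : Ideal.Quotient.mk (Ideal.span {(X : Polynomial ℤ) ^ 3})
      (C a₀ + C a₁ * X + C a₂ * X ^ 2) = 0 := by
    rw [map_add, map_add, map_mul, map_mul, map_pow]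
    convert h using 2 <;> simp [xx]
  rw [Ideal.Quotient.eq_zero_iff_mem, Ideal.mem_span_singleton, X_pow_dvd_iff] at h'
  have h0 := h' 0 (by norm_num)
  have h1 := h' 1 (by norm_num)
  have h2 := h' 2 (by norm_num)
  simp only [coeff_add, coeff_C_mul, coeff_C, coeff_X, coeff_X_pow] at h0 h1 h2
  norm_num at h0 h1 h2
  exact ⟨h0, h1, h2⟩

lemma eq3 {a₀ a₁ a₂ b₀ b₁ b₂ : ℤ}
    (h : (a₀ : TP 3) + (a₁ : TP 3) * xx 3 + (a₂ : TP 3) * xx 3 ^ 2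
       = (b₀ : TP 3) + (b₁ : TP 3) * xx 3 + (b₂ : TP 3) * xx 3 ^ 2) :
    a₀ = b₀ ∧ a₁ = b₁ ∧ a₂ = b₂ := by
  have := zero3 (a₀ := a₀ - b₀) (a₁ := a₁ - b₁) (a₂ := a₂ - b₂) (by push_cast; linear_combination h)
  refine ⟨by linarith [this.1], by linarith [this.2.1], by linarith [this.2.2]⟩

lemma hom_ext {R : Type*} [Ring R] (f g : TP 3 →+* R) (h : f (xx 3) = g (xx 3)) : f = g := by
  apply Ideal.Quotient.ringHom_ext
  apply Polynomial.ringHom_ext'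
  · exact Subsingleton.elim _ _
  · simpa [xx] using h


/-- The ring endomorphism of `TP 3` sending `x` to `β x + γ x²`. -/
def Phi (β γ : ℤ) : TP 3 →+* TP 3 :=
  Ideal.Quotient.lift _ (eval₂RingHom (Int.castRingHom (TP 3)) ((β:TP 3) * xx 3 + (γ:TP 3) * xx 3 ^ 2))
    (by
      intro a ha
      have hsub : ({(X:ℤ[X]) ^ 3} : Set ℤ[X]) ⊆
          ↑(RingHom.ker (eval₂RingHom (Int.castRingHom (TP 3)) ((β:TP 3) * xx 3 + (γ:TP 3) * xx 3 ^ 2))) := by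
        rintro f rfl
        simp only [SetLike.mem_coe, RingHom.mem_ker, coe_eval₂RingHom, eval₂_pow, eval₂_X]
        rw [show ((β:TP 3) * xx 3 + (γ:TP 3) * xx 3 ^ 2) = xx 3 * ((β:TP 3) + (γ:TP 3) * xx 3) by ring,
          mul_pow, x3, zero_mul]
      exact Ideal.span_le.2 hsub ha)

@[simp] lemma Phi_x (β γ : ℤ) : Phi β γ (xx 3) = (β:TP 3) * xx 3 + (γ:TP 3) * xx 3 ^ 2 := by
  simp [Phi, xx]

/-- membership in span of an integer -/
lemma mem_span_int {m a₀ a₁ a₂ : ℤ} (h0 : m ∣ a₀) (h1 : m ∣ a₁) (h2 : m ∣ a₂) :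
    ((a₀ : TP 3) + (a₁ : TP 3) * xx 3 + (a₂ : TP 3) * xx 3 ^ 2) ∈ Ideal.span {(m : TP 3)} := by
  obtain ⟨s₀, rfl⟩ := h0; obtain ⟨s₁, rfl⟩ := h1; obtain ⟨s₂, rfl⟩ := h2
  rw [Ideal.mem_span_singleton]
  exact ⟨(s₀ : TP 3) + (s₁ : TP 3) * xx 3 + (s₂ : TP 3) * xx 3 ^ 2, by push_cast; ring⟩


lemma int_fermat (p : ℕ) (hp : p.Prime) (a : ℤ) : (p:ℤ) ∣ a ^ p - a := by
  haveI := Fact.mk hp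
  have h : ((a ^ p - a : ℤ) : ZMod p) = 0 := by
    push_cast
    rw [ZMod.pow_card]
    ring
  exact (ZMod.intCast_zmod_eq_zero_iff_dvd _ p).mp h

lemma two_dvd_sub_sq (a : ℤ) : 2 ∣ a - a ^ 2 := by
  have h := Int.even_mul_succ_self (a - 1)
  obtain ⟨m, hm⟩ := h
  exact ⟨-m, by linarith⟩

lemma phi_eval (β γ a₀ a₁ a₂ : ℤ) :
    Phi β γ ((a₀ : TP 3) + (a₁ : TP 3) * xx 3 + (a₂ : TP 3) * xx 3 ^ 2)
    = ((a₀ : TP 3) + ((a₁*β : ℤ) : TP 3) * xx 3 + ((a₁*γ + a₂*β^2 : ℤ) : TP 3) * xx 3 ^ 2) := by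
  have h2 : ((β:TP 3) * xx 3 + (γ:TP 3) * xx 3 ^ 2) ^ 2 = (β:TP 3)^2 * xx 3 ^ 2 := by
    linear_combination ((2*β*γ : TP 3) + (γ:TP 3)^2 * xx 3) * x3
  rw [map_add, map_add, map_mul, map_mul, map_pow, map_intCast, map_intCast, map_intCast,
    Phi_x, h2]
  push_cast
  ring

lemma frob_phi (p : ℕ) (hp : p.Prime) (β γ : ℤ) (hb : (p:ℤ) ∣ β)
    (hodd : 2 < p → (p:ℤ) ∣ γ) (h2 : p = 2 → (2:ℤ) ∣ γ - 1) (a : TP 3) :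
    Phi β γ a - a ^ p ∈ Ideal.span {((p : ℕ) : TP 3)} := by
  obtain ⟨a₀, a₁, a₂, rfl⟩ := repr3 a
  rcases eq_or_lt_of_le hp.two_le with hp2 | hp3
  · -- p = 2
    subst hp2
    have hγ : (2:ℤ) ∣ γ - 1 := h2 rfl
    have key : Phi β γ ((a₀ : TP 3) + (a₁ : TP 3) * xx 3 + (a₂ : TP 3) * xx 3 ^ 2)
        - ((a₀ : TP 3) + (a₁ : TP 3) * xx 3 + (a₂ : TP 3) * xx 3 ^ 2) ^ 2
      = (((a₀ - a₀^2 : ℤ)) : TP 3) + (((a₁*β - 2*a₀*a₁ : ℤ)) : TP 3) * xx 3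
        + (((a₁*γ + a₂*β^2 - a₁^2 - 2*a₀*a₂ : ℤ)) : TP 3) * xx 3 ^ 2 := by
      rw [phi_eval]
      push_cast
      linear_combination (-(2*(a₁:TP 3)*(a₂:TP 3)) - (a₂:TP 3)^2 * xx 3) * x3
    rw [key]
    have d0 : (2:ℤ) ∣ a₀ - a₀^2 := two_dvd_sub_sq a₀
    have d1 : (2:ℤ) ∣ a₁*β - 2*a₀*a₁ := dvd_sub (Dvd.dvd.mul_left hb a₁) ⟨a₀*a₁, by ring⟩
    have d2 : (2:ℤ) ∣ a₁*γ + a₂*β^2 - a₁^2 - 2*a₀*a₂ := by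
      have h : (2:ℤ) ∣ ((a₁ - a₁^2) + a₁*(γ-1) + a₂*(β*β) - 2*(a₀*a₂)) :=
        dvd_sub (dvd_add (dvd_add (two_dvd_sub_sq a₁) (Dvd.dvd.mul_left hγ a₁))
          (Dvd.dvd.mul_left (Dvd.dvd.mul_right hb β) a₂)) ⟨a₀*a₂, rfl⟩
      have e : a₁*γ + a₂*β^2 - a₁^2 - 2*a₀*a₂
          = ((a₁ - a₁^2) + a₁*(γ-1) + a₂*(β*β) - 2*(a₀*a₂)) := by ring
      rw [e]; exact h
    have := mem_span_int d0 d1 d2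
    have e : ((2:ℤ) : TP 3) = ((2:ℕ) : TP 3) := by push_cast; ring
    rw [e] at this
    exact this
  · -- odd p
    have hc := hodd hp3
    have key : Phi β γ ((a₀ : TP 3) + (a₁ : TP 3) * xx 3 + (a₂ : TP 3) * xx 3 ^ 2)
        - ((a₀ : TP 3) + (a₁ : TP 3) * xx 3 + (a₂ : TP 3) * xx 3 ^ 2) ^ p
      = (Phi β γ ((a₀ : TP 3) + (a₁ : TP 3) * xx 3 + (a₂ : TP 3) * xx 3 ^ 2) - (a₀ : TP 3))
        + (((a₀ - a₀^p : ℤ)) : TP 3)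
        - (((a₀ : TP 3) + (a₁ : TP 3) * xx 3 + (a₂ : TP 3) * xx 3 ^ 2) ^ p - (a₀:TP 3) ^ p) := by
      push_cast; ring
    rw [key]
    refine sub_mem (add_mem ?_ ?_) ?_
    · rw [phi_eval]
      have := mem_span_int (m := (p:ℤ)) (a₀ := 0) (a₁ := a₁*β) (a₂ := a₁*γ + a₂*β^2)
        (dvd_zero _) (Dvd.dvd.mul_left hb a₁)
        (dvd_add (Dvd.dvd.mul_left hc a₁) (Dvd.dvd.mul_left (Dvd.dvd.mul_right hb β) a₂ |>.trans (dvd_of_eq (by ring))))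
      have e : ((p:ℤ) : TP 3) = ((p:ℕ) : TP 3) := by push_cast; ring
      rw [e] at this
      convert this using 1
      push_cast; ring
    · obtain ⟨t, ht⟩ := int_fermat p hp a₀
      have hF : (p:ℤ) ∣ a₀ - a₀^p := ⟨-t, by linarith⟩
      have := mem_span_int (m := (p:ℤ)) (a₀ := a₀ - a₀^p) (a₁ := 0) (a₂ := 0)
        hF (dvd_zero _) (dvd_zero _)
      have e : ((p:ℤ) : TP 3) = ((p:ℕ) : TP 3) := by push_cast; ring
      rw [e] at this
      convert this using 1
      push_cast; ring
    · set y : TP 3 := (a₁ : TP 3) * xx 3 + (a₂ : TP 3) * xx 3 ^ 2 with hy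
      have hy3 : y ^ 3 = 0 := by
        have : y = xx 3 * ((a₁ : TP 3) + (a₂ : TP 3) * xx 3) := by rw [hy]; ring
        rw [this, mul_pow, x3, zero_mul]
      have hrw : (a₀ : TP 3) + (a₁ : TP 3) * xx 3 + (a₂ : TP 3) * xx 3 ^ 2 = (a₀ : TP 3) + y := by
        rw [hy]; ring
      rw [hrw, add_pow, Finset.sum_range_succ]
      simp only [Nat.choose_self, Nat.cast_one, mul_one, Nat.sub_self, pow_zero]
      rw [add_sub_cancel_right]
      refine Ideal.sum_mem _ ?_
      intro k hk
      rw [Finset.mem_range] at hk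
      by_cases hge : 3 ≤ p - k
      · have : y ^ (p - k) = 0 := by
          have : y ^ (p - k) = y ^ 3 * y ^ (p - k - 3) := by rw [← pow_add]; congr 1; omega
          rw [this, hy3, zero_mul]
        rw [this]
        simp
      · have hk0 : k ≠ 0 := by
          intro h; subst h; simp at hge; omega
        have hdvd : p ∣ p.choose k := hp.dvd_choose_self hk0 hk
        obtain ⟨t, ht⟩ := hdvd
        rw [Ideal.mem_span_singleton, ht]
        push_cast
        exact Dvd.dvd.mul_left ⟨(t:TP 3), rfl⟩ _

section Val
variable {p : ℕ} [hf : Fact p.Prime]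

lemma dvd_of_one_le_val {z : ℤ} (h : 1 ≤ padicValInt p z) : (p:ℤ) ∣ z := by
  have := (padicValInt_dvd_iff (p := p) 1 z).2 (Or.inr h)
  simpa using this

lemma one_le_val_of_dvd {z : ℤ} (hz : z ≠ 0) (h : (p:ℤ) ∣ z) : 1 ≤ padicValInt p z := by
  have := (padicValInt_dvd_iff (p := p) 1 z).1 (by simpa using h)
  tauto

lemma val_eq_zero_of_not_dvd {z : ℤ} (h : ¬ (p:ℤ) ∣ z) : padicValInt p z = 0 := by
  by_contra h'
  exact h (dvd_of_one_le_val (by omega))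

lemma val_le_of_dvd {a c : ℤ} (hc : c ≠ 0) (hac : a ∣ c) : padicValInt p a ≤ padicValInt p c := by
  have h1 : (p:ℤ) ^ padicValInt p a ∣ c := (padicValInt_dvd (p := p) a).trans hac
  have := (padicValInt_dvd_iff (p := p) (padicValInt p a) c).1 h1
  tauto

lemma le_val_of_pow_dvd {n : ℕ} {c : ℤ} (hc : c ≠ 0) (h : (p:ℤ)^n ∣ c) :
    n ≤ padicValInt p c := by
  have := (padicValInt_dvd_iff (p := p) n c).1 h
  tauto


end Val

section NT
variable {b : Nat.Primes → ℤ} {G k : ℤ}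

lemma A_ne_zero (hA : CondA b) {q : Nat.Primes} (hq : b q ≠ 0) : b q * (b q - 1) ≠ 0 := by
  refine mul_ne_zero hq ?_
  intro h
  have h1 : b q = 1 := by linarith
  have := hA.2.1 q
  rw [h1] at this
  have h2 : ((q:ℕ):ℤ) ≤ 1 := Int.le_of_dvd one_pos this
  have := q.2.two_le
  omega

lemma G_dvd_A (hG : Ideal.span (Set.range fun p : Nat.Primes => b p * (b p - 1)) = Ideal.span {G})
    (q : Nat.Primes) : G ∣ b q * (b q - 1) := by
  rw [← Ideal.mem_span_singleton, ← hG]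
  exact Ideal.subset_span ⟨q, rfl⟩

lemma val_G (hA : CondA b)
    (hG : Ideal.span (Set.range fun p : Nat.Primes => b p * (b p - 1)) = Ideal.span {G})
    (hGne : G ≠ 0) (p : ℕ) [Fact p.Prime] :
    padicValInt p G
      = sInf {m : ℕ | ∃ q : Nat.Primes, b q ≠ 0 ∧ m = padicValInt p (b q * (b q - 1))} := by
  set S : Set ℕ := {m : ℕ | ∃ q : Nat.Primes, b q ≠ 0 ∧ m = padicValInt p (b q * (b q - 1))} with hS
  have hne : S.Nonempty := ⟨_, P2, hA.1, rfl⟩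
  have hmem : sInf S ∈ S := Nat.sInf_mem hne
  refine le_antisymm ?_ ?_
  · obtain ⟨q, hq, hq'⟩ := hmem
    rw [hq']
    exact val_le_of_dvd (A_ne_zero hA hq) (G_dvd_A hG q)
  · -- p ^ sInf S divides G
    have hdvd : (p:ℤ) ^ sInf S ∣ G := by
      have hGmem : G ∈ Ideal.span {(p:ℤ) ^ sInf S} := by
        have h1 : G ∈ Ideal.span (Set.range fun q : Nat.Primes => b q * (b q - 1)) := by
          rw [hG]; exact Ideal.mem_span_singleton_self G
        refine Ideal.span_le.2 ?_ h1
        rintro x ⟨q, rfl⟩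
        simp only [SetLike.mem_coe, Ideal.mem_span_singleton]
        by_cases hq : b q = 0
        · rw [hq]; simp
        · refine (padicValInt_dvd_iff _ _).2 (Or.inr ?_)
          exact Nat.sInf_le ⟨q, hq, rfl⟩
      rwa [Ideal.mem_span_singleton] at hGmem
    exact le_val_of_pow_dvd hGne hdvd

lemma val2_G (hA : CondA b)
    (hG : Ideal.span (Set.range fun p : Nat.Primes => b p * (b p - 1)) = Ideal.span {G})
    (hGne : G ≠ 0) :
    padicValInt 2 G = padicValInt 2 (b P2 * (b P2 - 1)) := by
  haveI : Fact (Nat.Prime 2) := ⟨Nat.prime_two⟩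
  have h2b : (2:ℤ) ∣ b P2 := by exact_mod_cast hA.2.1 P2
  have hA2 : b P2 * (b P2 - 1) ≠ 0 := A_ne_zero hA hA.1
  refine le_antisymm (val_le_of_dvd hA2 (G_dvd_A hG P2)) ?_
  have hval : padicValInt 2 (b P2 * (b P2 - 1)) = padicValInt 2 (b P2) := by
    rw [padicValInt.mul hA.1 (by intro h; apply hA2; rw [h]; ring)]
    have : padicValInt 2 (b P2 - 1) = 0 := by
      apply val_eq_zero_of_not_dvd
      intro h
      have : (2:ℤ) ∣ 1 := by
        have := dvd_sub h2b h
        simpa using this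
      norm_num at this
    omega
  rw [hval]
  -- 2 ^ v₂(b₂) divides G
  refine le_val_of_pow_dvd hGne ?_
  have hGmem : G ∈ Ideal.span {(2:ℤ) ^ padicValInt 2 (b P2)} := by
    have h1 : G ∈ Ideal.span (Set.range fun q : Nat.Primes => b q * (b q - 1)) := by
      rw [hG]; exact Ideal.mem_span_singleton_self G
    refine Ideal.span_le.2 ?_ h1
    rintro x ⟨q, rfl⟩
    simp only [SetLike.mem_coe, Ideal.mem_span_singleton]
    rcases eq_or_lt_of_le q.2.two_le with hq2 | hq2
    · have : q = P2 := Subtype.ext hq2.symm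
      subst this
      exact dvd_mul_of_dvd_left (by simpa using padicValInt_dvd (p := 2) (b P2)) _
    · exact hA.2.2 q hq2
  rwa [Ideal.mem_span_singleton] at hGmem

end NT
end Aux

namespace Aux
section NT2
variable {b : Nat.Primes → ℤ} {G k : ℤ}

lemma k_ne_zero (hk2 : 1 ≤ k) : k ≠ 0 := by omega

lemma hGc (hG : Ideal.span (Set.range fun p : Nat.Primes => b p * (b p - 1)) = Ideal.span {G})
    (p : Nat.Primes) : G * (k * (b p * (b p - 1)) / G) = k * (b p * (b p - 1)) :=
  Int.mul_ediv_cancel' (Dvd.dvd.mul_left (G_dvd_A hG p) k)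

lemma c2_odd (hA : CondA b)
    (hG : Ideal.span (Set.range fun p : Nat.Primes => b p * (b p - 1)) = Ideal.span {G})
    (hGne : G ≠ 0) (hk1 : Odd k) (hk2 : 1 ≤ k) :
    ¬ (2:ℤ) ∣ (k * (b P2 * (b P2 - 1)) / G) := by
  haveI : Fact (Nat.Prime 2) := ⟨Nat.prime_two⟩
  set c := k * (b P2 * (b P2 - 1)) / G with hc
  have hA2 : b P2 * (b P2 - 1) ≠ 0 := A_ne_zero hA hA.1
  have hGc2 : G * c = k * (b P2 * (b P2 - 1)) := hGc hG P2
  have hcne : c ≠ 0 := by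
    intro h
    rw [h, mul_zero] at hGc2
    exact (mul_ne_zero (k_ne_zero hk2) hA2) hGc2.symm
  have hval : padicValInt 2 G + padicValInt 2 c
      = padicValInt 2 k + padicValInt 2 (b P2 * (b P2 - 1)) := by
    rw [← padicValInt.mul hGne hcne, ← padicValInt.mul (k_ne_zero hk2) hA2, hGc2]
  have hvk : padicValInt 2 k = 0 := by
    apply val_eq_zero_of_not_dvd
    obtain ⟨m, hm⟩ := hk1
    rintro ⟨t, ht⟩
    omega
  have hvG := val2_G hA hG hGne
  have hvc : padicValInt 2 c = 0 := by omega
  intro hdvd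
  have h1 : 1 ≤ padicValInt 2 c :=
    one_le_val_of_dvd (p := 2) hcne (by exact_mod_cast hdvd)
  omega

lemma cp_dvd (hA : CondA b)
    (hG : Ideal.span (Set.range fun p : Nat.Primes => b p * (b p - 1)) = Ideal.span {G})
    (hGne : G ≠ 0) (hk2 : 1 ≤ k)
    (hk4 : ∀ p : Nat.Primes, CondBPrime b p → ((p : ℕ) : ℤ) ∣ k)
    (p : Nat.Primes) (hp : 2 < (p:ℕ)) :
    ((p:ℕ):ℤ) ∣ (k * (b p * (b p - 1)) / G) := by
  haveI : Fact (Nat.Prime (p:ℕ)) := ⟨p.2⟩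
  by_cases hbp : b p = 0
  · rw [hbp]
    norm_num
  · set c := k * (b p * (b p - 1)) / G with hc
    have hAp : b p * (b p - 1) ≠ 0 := A_ne_zero hA hbp
    have hGcp : G * c = k * (b p * (b p - 1)) := hGc hG p
    have hcne : c ≠ 0 := by
      intro h
      rw [h, mul_zero] at hGcp
      exact (mul_ne_zero (k_ne_zero hk2) hAp) hGcp.symm
    have hval : padicValInt (p:ℕ) G + padicValInt (p:ℕ) c
        = padicValInt (p:ℕ) k + padicValInt (p:ℕ) (b p * (b p - 1)) := by
      rw [← padicValInt.mul hGne hcne, ← padicValInt.mul (k_ne_zero hk2) hAp, hGcp]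
    have hvG := val_G hA hG hGne (p:ℕ)
    set S : Set ℕ :=
      {m : ℕ | ∃ q : Nat.Primes, b q ≠ 0 ∧ m = padicValInt (p:ℕ) (b q * (b q - 1))} with hS
    have hle : sInf S ≤ padicValInt (p:ℕ) (b p * (b p - 1)) := Nat.sInf_le ⟨p, hbp, rfl⟩
    have hvbp : padicValInt (p:ℕ) (b p * (b p - 1)) = padicValInt (p:ℕ) (b p) := by
      rw [padicValInt.mul hbp (by intro h; apply hAp; rw [h]; ring)]
      have : padicValInt (p:ℕ) (b p - 1) = 0 := by
        apply val_eq_zero_of_not_dvd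
        intro h
        have h1 : ((p:ℕ):ℤ) ∣ 1 := by
          have := dvd_sub (hA.2.1 p) h
          simpa using this
        have := Int.le_of_dvd one_pos h1
        omega
      omega
    have hvb1 : 1 ≤ padicValInt (p:ℕ) (b p) := one_le_val_of_dvd hbp (hA.2.1 p)
    apply dvd_of_one_le_val
    rcases eq_or_lt_of_le hle with heq | hlt
    · -- condition (B) prime
      have hB : CondBPrime b p := ⟨hp, hbp, by rw [hvbp] at heq; exact heq.symm⟩
      have hk := hk4 p hB
      have hvk : 1 ≤ padicValInt (p:ℕ) k := one_le_val_of_dvd (k_ne_zero hk2) hk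
      omega
    · omega

lemma comm_id (hGne : G ≠ 0)
    (hG : Ideal.span (Set.range fun p : Nat.Primes => b p * (b p - 1)) = Ideal.span {G})
    (p q : Nat.Primes) :
    b q * (k * (b p * (b p - 1)) / G) + (k * (b q * (b q - 1)) / G) * (b p)^2
    = b p * (k * (b q * (b q - 1)) / G) + (k * (b p * (b p - 1)) / G) * (b q)^2 := by
  have h1 := hGc (k := k) hG p
  have h2 := hGc (k := k) hG q
  apply mul_left_cancel₀ hGne
  linear_combination (b q - (b q)^2) * h1 + ((b p)^2 - b p) * h2

end NT2


lemma condB_dvd_A2 {b : Nat.Primes → ℤ} (hA : CondA b) (p : Nat.Primes) (hp : CondBPrime b p) :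
    ((p:ℕ):ℤ) ∣ b P2 * (b P2 - 1) := by
  haveI : Fact (Nat.Prime (p:ℕ)) := ⟨p.2⟩
  obtain ⟨hpo, hbp, hval⟩ := hp
  have h1 : 1 ≤ padicValInt (p:ℕ) (b p) := one_le_val_of_dvd hbp (hA.2.1 p)
  have h2 : sInf {m : ℕ | ∃ q : Nat.Primes, b q ≠ 0 ∧ m = padicValInt (p:ℕ) (b q * (b q - 1))}
      ≤ padicValInt (p:ℕ) (b P2 * (b P2 - 1)) := Nat.sInf_le ⟨P2, hA.1, rfl⟩
  exact dvd_of_one_le_val (by omega)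

lemma condB_finite {b : Nat.Primes → ℤ} (hA : CondA b) :
    {p : Nat.Primes | CondBPrime b p}.Finite := by
  have hA2 : b P2 * (b P2 - 1) ≠ 0 := A_ne_zero hA hA.1
  set N := (b P2 * (b P2 - 1)).natAbs with hN
  have hsub : {p : Nat.Primes | CondBPrime b p}
      ⊆ (fun p : Nat.Primes => (p:ℕ)) ⁻¹' (Set.Iic N) := by
    intro p hp
    have hd := condB_dvd_A2 hA p hp
    have hdN : (p:ℕ) ∣ N := by
      have := Int.natAbs_dvd_natAbs.mpr hd
      simpa using this
    exact Nat.le_of_dvd (Int.natAbs_pos.mpr hA2) hdN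
  exact Set.Finite.subset
    (Set.Finite.preimage (Subtype.coe_injective.injOn) (Set.finite_Iic N)) hsub

lemma sq_xx (β γ : ℤ) : ((β:TP 3) * xx 3 + (γ:TP 3) * xx 3 ^ 2) ^ 2 = (β:TP 3)^2 * xx 3 ^ 2 := by
  linear_combination ((2*(β:TP 3)*(γ:TP 3)) + (γ:TP 3)^2 * xx 3) * x3

lemma sigma_form (σ : TP 3 ≃+* TP 3)
    (hid : (Ideal.span {xx 3}).map σ.toRingHom = Ideal.span {xx 3}) :
    ∃ u v : ℤ, σ (xx 3) = (u : TP 3) * xx 3 + (v : TP 3) * xx 3 ^ 2 ∧ (u = 1 ∨ u = -1) := by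
  have hmem : σ (xx 3) ∈ Ideal.span {xx 3} := by
    rw [← hid]
    exact Ideal.mem_map_of_mem _ (Ideal.subset_span rfl)
  rw [Ideal.mem_span_singleton] at hmem
  obtain ⟨t, ht⟩ := hmem
  obtain ⟨t₀, t₁, t₂, rfl⟩ := repr3 t
  have hσx : σ (xx 3) = (t₀ : TP 3) * xx 3 + (t₁ : TP 3) * xx 3 ^ 2 := by
    rw [ht]
    linear_combination (t₂ : TP 3) * x3
  refine ⟨t₀, t₁, hσx, ?_⟩
  obtain ⟨s, hs⟩ := σ.surjective (xx 3)
  obtain ⟨s₀, s₁, s₂, rfl⟩ := repr3 s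
  have hmap : σ ((s₀ : TP 3) + (s₁ : TP 3) * xx 3 + (s₂ : TP 3) * xx 3 ^ 2)
      = (s₀ : TP 3) + ((s₁*t₀ : ℤ) : TP 3) * xx 3 + ((s₁*t₁ + s₂*t₀^2 : ℤ) : TP 3) * xx 3 ^ 2 := by
    rw [map_add, map_add, map_mul, map_mul, map_pow, map_intCast, map_intCast, map_intCast,
      hσx, sq_xx]
    push_cast
    ring
  rw [hmap] at hs
  have hx : (xx 3) = ((0:ℤ) : TP 3) + ((1:ℤ) : TP 3) * xx 3 + ((0:ℤ) : TP 3) * xx 3 ^ 2 := by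
    push_cast; ring
  obtain ⟨-, h1, -⟩ := eq3 (hs.trans hx)
  have : IsUnit t₀ := IsUnit.of_mul_eq_one (b := s₁) (by linarith [h1])
  exact Int.isUnit_iff.mp this

lemma intertwine_coeffs (σ : TP 3 ≃+* TP 3) (u v : ℤ)
    (hσx : σ (xx 3) = (u : TP 3) * xx 3 + (v : TP 3) * xx 3 ^ 2)
    (f g : TP 3 →+* TP 3) (βf γf βg γg : ℤ)
    (hf : f (xx 3) = (βf : TP 3) * xx 3 + (γf : TP 3) * xx 3 ^ 2)
    (hg : g (xx 3) = (βg : TP 3) * xx 3 + (γg : TP 3) * xx 3 ^ 2)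
    (h : σ.toRingHom.comp f = g.comp σ.toRingHom) :
    βf * u = u * βg ∧ βf * v + γf * u^2 = u * γg + v * βg^2 := by
  have h' := RingHom.congr_fun h (xx 3)
  simp only [RingHom.coe_comp, Function.comp_apply, RingEquiv.toRingHom_eq_coe,
    RingHom.coe_coe] at h'
  rw [hf, hσx] at h'
  have hL : σ ((βf : TP 3) * xx 3 + (γf : TP 3) * xx 3 ^ 2)
      = ((0:ℤ) : TP 3) + ((βf*u : ℤ) : TP 3) * xx 3 + ((βf*v + γf*u^2 : ℤ) : TP 3) * xx 3 ^ 2 := by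
    rw [map_add, map_mul, map_mul, map_pow, map_intCast, map_intCast, hσx, sq_xx]
    push_cast; ring
  have hR : g ((u : TP 3) * xx 3 + (v : TP 3) * xx 3 ^ 2)
      = ((0:ℤ) : TP 3) + ((u*βg : ℤ) : TP 3) * xx 3 + ((u*γg + v*βg^2 : ℤ) : TP 3) * xx 3 ^ 2 := by
    rw [map_add, map_mul, map_mul, map_pow, map_intCast, map_intCast, hg, sq_xx]
    push_cast; ring
  rw [hL, hR] at h'
  obtain ⟨-, h1, h2⟩ := eq3 h'
  exact ⟨h1, h2⟩

end Aux

theorem stmt6 (b b' : Nat.Primes → ℤ) (k k' G G' : ℤ)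
    (hA : CondA b) (hA' : CondA b')
    (hG : Ideal.span (Set.range fun p : Nat.Primes => b p * (b p - 1)) = Ideal.span {G})
    (hG0 : 0 ≤ G)
    (hG' : Ideal.span (Set.range fun p : Nat.Primes => b' p * (b' p - 1)) = Ideal.span {G'})
    (hG0' : 0 ≤ G')
    (hk1 : Odd k) (hk2 : 1 ≤ k) (hk3 : 2 * k ≤ G)
    (hk4 : ∀ p : Nat.Primes, CondBPrime b p → ((p : ℕ) : ℤ) ∣ k)
    (hk1' : Odd k') (hk2' : 1 ≤ k') (hk3' : 2 * k' ≤ G')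
    (hk4' : ∀ p : Nat.Primes, CondBPrime b' p → ((p : ℕ) : ℤ) ∣ k') :
    ({p : Nat.Primes | CondBPrime b p}.Finite ∧
      ∀ p : Nat.Primes, CondBPrime b p → ((p : ℕ) : ℤ) ∣ b P2 * (b P2 - 1)) ∧
    ((∀ p : Nat.Primes, G ∣ k * (b p * (b p - 1))) ∧
      ∃ S : AdamsFamily 3, ∀ p : Nat.Primes,
        S.ψ p (xx 3) =
          (b p : TP 3) * xx 3 + ((k * (b p * (b p - 1)) / G : ℤ) : TP 3) * xx 3 ^ 2) ∧
    (∀ S S' : AdamsFamily 3,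
      (∀ p : Nat.Primes, S.ψ p (xx 3) =
          (b p : TP 3) * xx 3 + ((k * (b p * (b p - 1)) / G : ℤ) : TP 3) * xx 3 ^ 2) →
      (∀ p : Nat.Primes, S'.ψ p (xx 3) =
          (b' p : TP 3) * xx 3 + ((k' * (b' p * (b' p - 1)) / G' : ℤ) : TP 3) * xx 3 ^ 2) →
      (AdamsIso S S' ↔ (∀ p : Nat.Primes, b p = b' p) ∧ k = k')) ∧
    (∀ (S T : AdamsFamily 3) (c : Nat.Primes → ℤ),
      (∀ p : Nat.Primes, S.ψ p (xx 3) =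
          (b p : TP 3) * xx 3 + ((k * (b p * (b p - 1)) / G : ℤ) : TP 3) * xx 3 ^ 2) →
      Int.ModEq 2 (c P2) 1 → (∀ p : Nat.Primes, 2 < (p : ℕ) → ((p : ℕ) : ℤ) ∣ c p) →
      (∀ p : Nat.Primes, T.ψ p (xx 3) = (c p : TP 3) * xx 3 ^ 2) →
      ¬ AdamsIso S T) := by
  have hGpos : 0 < G := by linarith
  have hGpos' : 0 < G' := by linarith
  have hGne : G ≠ 0 := ne_of_gt hGpos
  refine ⟨⟨Aux.condB_finite hA, fun p hp => Aux.condB_dvd_A2 hA p hp⟩, ⟨?_, ?_⟩, ?_, ?_⟩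
  · exact fun p => Dvd.dvd.mul_left (Aux.G_dvd_A hG p) k
  · -- existence of the Adams family
    refine ⟨⟨fun p => Aux.Phi (b p) (k * (b p * (b p - 1)) / G), ?_, ?_, ?_⟩,
      fun p => Aux.Phi_x _ _⟩
    · intro p a ha
      rw [Ideal.mem_span_singleton] at ha ⊢
      obtain ⟨t, rfl⟩ := ha
      rw [map_mul, Aux.Phi_x]
      exact Dvd.dvd.mul_right
        ⟨(b p : TP 3) + ((k * (b p * (b p - 1)) / G : ℤ) : TP 3) * xx 3, by push_cast; ring⟩ _
    · intro p q
      apply Aux.hom_ext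
      simp only [RingHom.coe_comp, Function.comp_apply, Aux.Phi_x]
      have key : ∀ r s : Nat.Primes,
          Aux.Phi (b r) (k * (b r * (b r - 1)) / G)
            ((b s : TP 3) * xx 3 + ((k * (b s * (b s - 1)) / G : ℤ) : TP 3) * xx 3 ^ 2)
          = (((0:ℤ)) : TP 3) + ((b s * b r : ℤ) : TP 3) * xx 3
            + ((b s * (k * (b r * (b r - 1)) / G)
                + (k * (b s * (b s - 1)) / G) * (b r)^2 : ℤ) : TP 3) * xx 3 ^ 2 := by
        intro r s
        have e : (b s : TP 3) * xx 3 + ((k * (b s * (b s - 1)) / G : ℤ) : TP 3) * xx 3 ^ 2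
            = (((0:ℤ)) : TP 3) + ((b s : ℤ) : TP 3) * xx 3
              + ((k * (b s * (b s - 1)) / G : ℤ) : TP 3) * xx 3 ^ 2 := by push_cast; ring
        rw [e, Aux.phi_eval]
      rw [key p q, key q p, Aux.comm_id hGne hG p q, Int.mul_comm (b q) (b p)]
    · intro p a
      refine Aux.frob_phi (p:ℕ) p.2 _ _ (by exact_mod_cast hA.2.1 p)
        (fun h => Aux.cp_dvd hA hG hGne hk2 hk4 p h) (fun h2 => ?_) a
      have hp2 : p = P2 := Subtype.ext h2
      rw [hp2]
      have := Aux.c2_odd hA hG hGne hk1 hk2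
      omega
  · -- classification
    intro S S' hS hS'
    constructor
    · rintro ⟨σ, hσI, hσψ⟩
      obtain ⟨u, v, hσx, hu⟩ := Aux.sigma_form σ hσI
      have hu2 : u ^ 2 = 1 := by rcases hu with rfl | rfl <;> norm_num
      have hbb : ∀ p, b p = b' p := by
        intro p
        have h1 := (Aux.intertwine_coeffs σ u v hσx (S.ψ p) (S'.ψ p) (b p) _ (b' p) _
          (hS p) (hS' p) (hσψ p)).1
        rcases hu with rfl | rfl <;> linarith
      refine ⟨hbb, ?_⟩
      have hb : b = b' := funext hbb
      subst hb
      have hGG : G = G' := by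
        have hsp : Ideal.span ({G} : Set ℤ) = Ideal.span {G'} := by rw [← hG, ← hG']
        rcases Int.associated_iff.mp (Ideal.span_singleton_eq_span_singleton.mp hsp) with h | h
        · exact h
        · omega
      subst hGG
      have h2 := (Aux.intertwine_coeffs σ u v hσx (S.ψ P2) (S'.ψ P2) (b P2) _ (b P2) _
        (hS P2) (hS' P2) (hσψ P2)).2
      have hc := Aux.hGc (b := b) (k := k) (G := G) hG P2
      have hc' := Aux.hGc (b := b) (k := k') (G := G) hG P2
      have hA2 : b P2 * (b P2 - 1) ≠ 0 := Aux.A_ne_zero hA hA.1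
      have hkey : (k - u * k' - v * G) * (b P2 * (b P2 - 1)) = 0 := by
        linear_combination (-1 : ℤ) * hc + u * hc' + G * h2
          + (-(G * (k * (b P2 * (b P2 - 1)) / G))) * hu2
      have hfin : k - u * k' = v * G := by
        rcases mul_eq_zero.mp hkey with h | h
        · linarith
        · exact absurd h hA2
      rcases hu with rfl | rfl
      · rcases lt_trichotomy v 0 with hv | hv | hv
        · exfalso
          have h1 : v ≤ -1 := by omega
          have h2' : v * G ≤ -1 * G := mul_le_mul_of_nonneg_right h1 (le_of_lt hGpos)
          linarith
        · subst hv; linarith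
        · exfalso
          have h1 : (1:ℤ) ≤ v := by omega
          have h2' : 1 * G ≤ v * G := mul_le_mul_of_nonneg_right h1 (le_of_lt hGpos)
          linarith
      · have hv1 : v = 1 := by
          rcases lt_trichotomy v 1 with hv | hv | hv
          · exfalso
            have h1 : v ≤ 0 := by omega
            have h2' : v * G ≤ 0 * G := mul_le_mul_of_nonneg_right h1 (le_of_lt hGpos)
            linarith
          · exact hv
          · exfalso
            have h1 : (2:ℤ) ≤ v := by omega
            have h2' : 2 * G ≤ v * G := mul_le_mul_of_nonneg_right h1 (le_of_lt hGpos)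
            linarith
        subst hv1
        linarith
    · rintro ⟨hbb, hkk⟩
      have hb : b = b' := funext hbb
      subst hb
      subst hkk
      have hGG : G = G' := by
        have hsp : Ideal.span ({G} : Set ℤ) = Ideal.span {G'} := by rw [← hG, ← hG']
        rcases Int.associated_iff.mp (Ideal.span_singleton_eq_span_singleton.mp hsp) with h | h
        · exact h
        · omega
      subst hGG
      have hψ : ∀ p, S.ψ p = S'.ψ p := fun p => Aux.hom_ext _ _ (by rw [hS p, hS' p])
      exact ⟨RingEquiv.refl _, by rw [RingEquiv.toRingHom_refl, Ideal.map_id],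
        fun p => by rw [RingEquiv.toRingHom_refl, RingHom.id_comp, RingHom.comp_id, hψ p]⟩
  · -- part (iv)
    intro S T c hS hc2 hcodd hT
    rintro ⟨σ, hσI, hσψ⟩
    obtain ⟨u, v, hσx, hu⟩ := Aux.sigma_form σ hσI
    have hg : T.ψ P2 (xx 3) = ((0:ℤ) : TP 3) * xx 3 + ((c P2 : ℤ) : TP 3) * xx 3 ^ 2 := by
      rw [hT P2]; push_cast; ring
    have h1 := (Aux.intertwine_coeffs σ u v hσx (S.ψ P2) (T.ψ P2) (b P2) _ 0 (c P2)
      (hS P2) hg (hσψ P2)).1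
    have : b P2 = 0 := by rcases hu with rfl | rfl <;> linarith
    exact hA.1 this
end
end

section
/- The number of isomorphism classes of filtered λ-ring structures R on ℤ[x]/(x³) such that ψ_p^R(x) ≡ p^r x (mod x²) for all primes p is exactly 1 when r = 1, exactly 3 when r = 2, and exactly 60 when r = 4. (In particular, there are in total 64 isomorphism classes of filtered λ-ring structures on ℤ[x]/(x³) with ψ_p(x) ≡ p^r x (mod x²) for all primes p for some r ∈ {1, 2, 4}.) -/
open Polynomial

noncomputable section

local notation "x3" => xx 3
def mk3 : Polynomial ℤ →+* TP 3 := Ideal.Quotient.mk _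

lemma x3_cube : x3 ^ 3 = 0 := by
  show (Ideal.Quotient.mk _ X : TP 3) ^ 3 = 0
  rw [← map_pow, Ideal.Quotient.eq_zero_iff_mem]
  exact Ideal.subset_span rfl

lemma x3_four : x3 ^ 4 = 0 := by
  have : (x3:TP 3) ^ 4 = x3 ^ 3 * x3 := by ring
  rw [this, x3_cube, zero_mul]

/-- canonical representation -/
def rep (a b c : ℤ) : TP 3 := (a : TP 3) + (b : TP 3) * x3 + (c : TP 3) * x3 ^ 2

lemma rep_eq_mk (a b c : ℤ) : rep a b c = mk3 (C a + C b * X + C c * X ^ 2) := by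
  simp only [mk3, map_add, map_mul, map_pow, Polynomial.C_eq_intCast, map_intCast]
  rfl

lemma rep_inj {a b c a' b' c' : ℤ} (h : rep a b c = rep a' b' c') :
    a = a' ∧ b = b' ∧ c = c' := by
  rw [rep_eq_mk, rep_eq_mk] at h
  have h2 : (C a + C b * X + C c * X ^ 2 : Polynomial ℤ) -
      (C a' + C b' * X + C c' * X ^ 2) ∈ Ideal.span {(X : Polynomial ℤ) ^ 3} :=
    Ideal.Quotient.eq.mp h
  rw [Ideal.mem_span_singleton] at h2
  rw [Polynomial.X_pow_dvd_iff] at h2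
  have e0 := h2 0 (by norm_num)
  have e1 := h2 1 (by norm_num)
  have e2 := h2 2 (by norm_num)
  simp only [coeff_sub, coeff_add, coeff_C_mul, coeff_X_pow, coeff_C, coeff_X, sub_eq_zero] at e0 e1 e2
  norm_num at e0 e1 e2
  exact ⟨e0, e1, e2⟩

lemma rep_surj (u : TP 3) : ∃ a b c : ℤ, u = rep a b c := by
  obtain ⟨q, rfl⟩ := Ideal.Quotient.mk_surjective u
  refine ⟨q.coeff 0, q.coeff 1, q.coeff 2, ?_⟩
  rw [rep_eq_mk]
  refine (Ideal.Quotient.eq (I := Ideal.span {(X : Polynomial ℤ) ^ 3})).mpr ?_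
  rw [Ideal.mem_span_singleton, Polynomial.X_pow_dvd_iff]
  intro d hd
  interval_cases d <;>
  · simp only [coeff_sub, coeff_add, coeff_C_mul, coeff_X_pow, coeff_C, coeff_X]
    norm_num

lemma rep_add (a b c d e f : ℤ) : rep a b c + rep d e f = rep (a+d) (b+e) (c+f) := by
  simp only [rep]; push_cast; ring

lemma rep_mul (a b c d e f : ℤ) :
    rep a b c * rep d e f = rep (a*d) (a*e+b*d) (a*f+b*e+c*d) := by
  have h3 := x3_cube
  have h4 := x3_four
  simp only [rep]; push_cast
  linear_combination (((b:TP 3))*(f:TP 3) + (c:TP 3)*(e:TP 3)) * h3 + ((c:TP 3)*(f:TP 3)) * h4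

lemma intCast_rep (a : ℤ) : ((a : ℤ) : TP 3) = rep a 0 0 := by simp [rep]
lemma x3_rep : (x3 : TP 3) = rep 0 1 0 := by simp [rep]
lemma x3sq_rep : (x3 : TP 3) ^ 2 = rep 0 0 1 := by simp [rep]


lemma rep_sub (a b c d e f : ℤ) : rep a b c - rep d e f = rep (a-d) (b-e) (c-f) := by
  simp only [rep]; push_cast; ring

-- span characterizations
lemma mem_span_x3 {u : TP 3} : u ∈ Ideal.span {x3} ↔ ∃ b c : ℤ, u = rep 0 b c := by
  rw [Ideal.mem_span_singleton]
  constructor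
  · rintro ⟨t, rfl⟩
    obtain ⟨a, b, c, rfl⟩ := rep_surj t
    exact ⟨a, b, by rw [x3_rep, rep_mul]; norm_num⟩
  · rintro ⟨b, c, rfl⟩
    exact ⟨rep b c 0, by rw [x3_rep, rep_mul]; norm_num⟩

lemma mem_span_x3sq {u : TP 3} : u ∈ Ideal.span {x3 ^ 2} ↔ ∃ c : ℤ, u = rep 0 0 c := by
  rw [Ideal.mem_span_singleton]
  constructor
  · rintro ⟨t, rfl⟩
    obtain ⟨a, b, c, rfl⟩ := rep_surj t
    exact ⟨a, by rw [x3sq_rep, rep_mul]; norm_num⟩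
  · rintro ⟨c, rfl⟩
    exact ⟨rep c 0 0, by rw [x3sq_rep, rep_mul]; norm_num⟩

lemma mem_span_int {u : TP 3} {m : ℤ} :
    u ∈ Ideal.span {((m : ℤ) : TP 3)} ↔ ∃ a b c : ℤ, u = rep (m*a) (m*b) (m*c) := by
  rw [Ideal.mem_span_singleton]
  constructor
  · rintro ⟨t, rfl⟩
    obtain ⟨a, b, c, rfl⟩ := rep_surj t
    exact ⟨a, b, c, by rw [intCast_rep, rep_mul]; norm_num⟩
  · rintro ⟨a, b, c, rfl⟩
    exact ⟨rep a b c, by rw [intCast_rep, rep_mul]; norm_num⟩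

-- hom extensionality
lemma hom_ext {S : Type} [CommRing S] {f g : TP 3 →+* S} (h : f x3 = g x3) : f = g := by
  apply Ideal.Quotient.ringHom_ext
  apply Polynomial.ringHom_ext
  · intro a
    exact RingHom.congr_fun (RingHom.ext_int
      (RingHom.comp (f.comp (Ideal.Quotient.mk _)) C)
      (RingHom.comp (g.comp (Ideal.Quotient.mk _)) C)) a
  · exact h

-- lift
def lift3 (y : TP 3) (hy : y ^ 3 = 0) : TP 3 →+* TP 3 :=
  Ideal.Quotient.lift _ (eval₂RingHom (Int.castRingHom (TP 3)) y) (by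
    intro a ha
    rw [Ideal.mem_span_singleton] at ha
    obtain ⟨g, rfl⟩ := ha
    simp [coe_eval₂RingHom, eval₂_mul, eval₂_pow, eval₂_X, hy])

lemma lift3_x (y : TP 3) (hy : y ^ 3 = 0) : lift3 y hy x3 = y := by
  show Ideal.Quotient.lift _ _ _ (Ideal.Quotient.mk _ X) = y
  rw [Ideal.Quotient.lift_mk]
  simp [coe_eval₂RingHom]

-- workhorse: value of any hom on rep, given value at x3
lemma hom_rep {ψ : TP 3 →+* TP 3} {β γ : ℤ} (hx : ψ x3 = rep 0 β γ) (a b c : ℤ) :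
    ψ (rep a b c) = rep a (b*β) (b*γ + c*β^2) := by
  have h1 : rep a b c = ((a:ℤ) : TP 3) + ((b:ℤ) : TP 3) * x3 + ((c:ℤ):TP 3) * x3^2 := by
    rw [intCast_rep, intCast_rep, intCast_rep, x3sq_rep, x3_rep, rep_mul, rep_mul, rep_add,
      rep_add]
    norm_num
  rw [h1, map_add, map_add, map_mul, map_mul, map_pow, map_intCast, map_intCast, map_intCast,
    hx, intCast_rep, intCast_rep, intCast_rep, pow_two, rep_mul, rep_mul, rep_mul, rep_add,
    rep_add]
  norm_num
  ring_nf

lemma cube_zero (b c : ℤ) : (rep 0 b c) ^ 3 = 0 := by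
  have : (rep 0 b c) ^ 3 = rep 0 b c * rep 0 b c * rep 0 b c := by ring
  rw [this, rep_mul, rep_mul]
  norm_num
  have : rep 0 0 0 = ((0:ℤ) : TP 3) := by rw [intCast_rep]
  rw [this]; norm_num

-- CharP of TP3 / (p)
lemma charP_quot (p : ℕ) (hp : 0 < p) :
    CharP (TP 3 ⧸ Ideal.span {((p:ℕ) : TP 3)}) p := by
  constructor
  intro n
  have hcast : ((n : ℕ) : TP 3 ⧸ Ideal.span {((p:ℕ) : TP 3)}) =
      Ideal.Quotient.mk _ ((n : ℕ) : TP 3) := by push_cast; rfl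
  rw [hcast, Ideal.Quotient.eq_zero_iff_mem]
  have hps : ((p:ℕ) : TP 3) = (((p:ℤ)) : TP 3) := by push_cast; rfl
  rw [hps, mem_span_int]
  constructor
  · rintro ⟨a, b, c, h⟩
    have : ((n:ℤ) : TP 3) = rep ((p:ℤ)*a) ((p:ℤ)*b) ((p:ℤ)*c) := by push_cast at h ⊢; exact h
    rw [intCast_rep] at this
    obtain ⟨h1, -, -⟩ := rep_inj this
    have : (p:ℤ) ∣ (n:ℤ) := ⟨a, h1⟩
    exact_mod_cast this
  · rintro ⟨t, rfl⟩
    refine ⟨t, 0, 0, ?_⟩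
    have : (((p:ℤ) * t : ℤ) : TP 3) = rep ((p:ℤ)*t) 0 0 := intCast_rep _
    push_cast at this ⊢
    rw [this]; norm_num

lemma frob_iff (p : ℕ) (hp : p.Prime) (ψ : TP 3 →+* TP 3)
    (h : ψ x3 - x3 ^ p ∈ Ideal.span {((p:ℕ) : TP 3)}) :
    ∀ a : TP 3, ψ a - a ^ p ∈ Ideal.span {((p:ℕ) : TP 3)} := by
  haveI : Fact p.Prime := ⟨hp⟩
  haveI := charP_quot p hp.pos
  set I := Ideal.span {((p:ℕ) : TP 3)}
  set Q := TP 3 ⧸ I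
  haveI : ExpChar Q p := ExpChar.prime hp
  set f : TP 3 →+* Q := (Ideal.Quotient.mk I).comp ψ
  set g : TP 3 →+* Q := (frobenius Q p).comp (Ideal.Quotient.mk I)
  have hfg : f = g := by
    refine hom_ext (S := Q) ?_
    show Ideal.Quotient.mk I (ψ x3) = frobenius Q p (Ideal.Quotient.mk I x3)
    rw [frobenius_def, ← map_pow, Ideal.Quotient.mk_eq_mk_iff_sub_mem]
    exact h
  intro a
  have := RingHom.congr_fun hfg a
  simp only [f, g, RingHom.comp_apply, frobenius_def, ← map_pow] at this
  rw [← Ideal.Quotient.mk_eq_mk_iff_sub_mem]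
  exact this

-- number theory
lemma dvd_of_zmod (m : ℕ) (z : ℤ) (h : (z : ZMod m) = 0) : (m : ℤ) ∣ z :=
  (ZMod.intCast_zmod_eq_zero_iff_dvd z m).mp h

lemma three_dvd (n : ℤ) : (3:ℤ) ∣ n^7 - n^3 := by
  apply dvd_of_zmod 3
  push_cast
  have : ∀ m : ZMod 3, m^7 - m^3 = 0 := by decide
  exact this _

lemma five_dvd (n : ℤ) : (5:ℤ) ∣ n^7 - n^3 := by
  apply dvd_of_zmod 5
  push_cast
  have : ∀ m : ZMod 5, m^7 - m^3 = 0 := by decide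
  exact this _

lemma three_dvd' (n : ℤ) : (3:ℤ) ∣ n^3 - n := by
  apply dvd_of_zmod 3
  push_cast
  have : ∀ m : ZMod 3, m^3 - m = 0 := by decide
  exact this _

lemma sixteen_dvd (k : ℤ) : (16:ℤ) ∣ (2*k+1)^4 - 1 := by
  obtain ⟨m, hm⟩ := Int.even_mul_succ_self k
  have : (2*k+1)^4 - 1 = 8*(k*(k+1))*(2*k^2+2*k+1) := by ring
  rw [this, hm]
  exact ⟨(m)*(2*k^2+2*k+1), by ring⟩

lemma eight_dvd (k : ℤ) : (8:ℤ) ∣ (2*k+1)^2 - 1 := by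
  obtain ⟨m, hm⟩ := Int.even_mul_succ_self k
  have : (2*k+1)^2 - 1 = 4*(k*(k+1)) := by ring
  rw [this, hm]
  exact ⟨m, by ring⟩

/-- The key exact divisor existence: for r ∈ {1,2,4} and any prime p, there is E with
`(2^(2r) - 2^r) * E = p^(2r) - p^r`, `E = 1` for `p = 2`, and `p ∣ E` for odd `p`. -/
lemma exE {r : ℕ} (hr : r = 1 ∨ r = 2 ∨ r = 4) (p : ℕ) (hp : p.Prime) :
    ∃ E : ℤ, ((2:ℤ)^(2*r) - 2^r) * E = (p:ℤ)^(2*r) - (p:ℤ)^r ∧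
      (p = 2 → E = 1) ∧ (p ≠ 2 → (p:ℤ) ∣ E) := by
  rcases eq_or_ne p 2 with rfl | hp2
  · exact ⟨1, by push_cast; ring, fun _ => rfl, fun h => absurd rfl h⟩
  · -- p odd prime
    have hodd : Odd p := hp.odd_of_ne_two hp2
    obtain ⟨k, hk⟩ : ∃ k : ℤ, (p:ℤ) = 2*k+1 := by
      obtain ⟨m, hm⟩ := hodd
      refine ⟨(m:ℤ), ?_⟩
      rw [hm]; push_cast; ring
    set q : ℤ := (p:ℤ)
    rcases hr with rfl | rfl | rfl
    · -- r = 1 : need 2 * E = q^2 - q with p ∣ E ; E = q*(q-1)/2 = q*k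
      refine ⟨q*k, ?_, fun h => absurd h hp2, fun _ => ⟨k, by ring⟩⟩
      norm_num
      rw [hk]; ring
    · -- r = 2 : D = 12, q^4 - q^2 = q^2(q^2-1); E = q^2(q^2-1)/12
      have h4 : (4:ℤ) ∣ q^2 - 1 := by
        obtain ⟨t, ht⟩ := eight_dvd k
        rw [← hk] at ht
        exact ⟨2*t, by rw [ht]; ring⟩
      have h3 : (3:ℤ) ∣ q*(q^2-1) := by
        have := three_dvd' q
        have e : q*(q^2-1) = q^3 - q := by ring
        rw [e]; exact this
      have h12 : (12:ℤ) ∣ q*(q^2-1) := by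
        obtain ⟨u, hu⟩ := h4
        obtain ⟨v, hv⟩ := h3
        have hcop : IsCoprime (4:ℤ) 3 := by
          rw [Int.isCoprime_iff_gcd_eq_one]; decide
        have : (12:ℤ) = 4 * 3 := by norm_num
        rw [this]
        exact (IsCoprime.mul_dvd hcop ⟨q*u, by rw [show (4:ℤ)*(q*u) = q*(4*u) by ring, ← hu]⟩ ⟨v, hv⟩)
      obtain ⟨w, hw⟩ := h12
      refine ⟨q*w, ?_, fun h => absurd h hp2, fun _ => ⟨w, rfl⟩⟩
      norm_num
      have : q^4 - q^2 = q * (q*(q^2-1)) := by ring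
      rw [this, hw]; ring
    · -- r = 4 : D = 240 = 16*3*5 ; need 240 ∣ q^3(q^4-1), E = q * (that/240)
      have h16 : (16:ℤ) ∣ q^4 - 1 := by rw [hk]; exact sixteen_dvd k
      have h15 : (15:ℤ) ∣ q^3*(q^4-1) := by
        have e : q^3*(q^4-1) = q^7 - q^3 := by ring
        rw [e]
        have hcop : IsCoprime (3:ℤ) 5 := by
          rw [Int.isCoprime_iff_gcd_eq_one]; decide
        have : (15:ℤ) = 3 * 5 := by norm_num
        rw [this]
        exact IsCoprime.mul_dvd hcop (three_dvd q) (five_dvd q)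
      have h240 : (240:ℤ) ∣ q^3*(q^4-1) := by
        have hcop : IsCoprime (16:ℤ) 15 := by
          rw [Int.isCoprime_iff_gcd_eq_one]; decide
        have : (240:ℤ) = 16 * 15 := by norm_num
        rw [this]
        refine IsCoprime.mul_dvd hcop ?_ h15
        obtain ⟨t, ht⟩ := h16
        exact ⟨q^3*t, by rw [show (16:ℤ)*(q^3*t) = q^3*(16*t) by ring, ← ht]⟩
      obtain ⟨w, hw⟩ := h240
      refine ⟨q*w, ?_, fun h => absurd h hp2, fun _ => ⟨w, rfl⟩⟩
      norm_num
      have : q^8 - q^4 = q * (q^3*(q^4-1)) := by ring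
      rw [this, hw]; ring

def Dd (r : ℕ) : ℤ := 2^(2*r) - 2^r

lemma Dd_ne {r : ℕ} (hr : r = 1 ∨ r = 2 ∨ r = 4) : Dd r ≠ 0 := by
  rcases hr with rfl | rfl | rfl <;> norm_num [Dd]

/-- the subtype appearing in `classCount` -/
abbrev Tsub (r : ℕ) := {R : AdamsFamily 3 //
      ∀ p : Nat.Primes,
        R.ψ p (xx 3) - ((p : ℕ) : TP 3) ^ r * xx 3 ∈ Ideal.span {xx 3 ^ 2}}

lemma rep_congr {a b c a' b' c' : ℤ} (h1 : a = a') (h2 : b = b') (h3 : c = c') :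
    rep a b c = rep a' b' c' := by rw [h1, h2, h3]

lemma prx_rep (r : ℕ) (p : Nat.Primes) :
    ((p : ℕ) : TP 3) ^ r * x3 = rep 0 ((p:ℤ)^r) 0 := by
  have h1 : ((p : ℕ) : TP 3) ^ r = (((p:ℤ)^r : ℤ) : TP 3) := by push_cast; rfl
  rw [h1, intCast_rep, x3_rep, rep_mul]
  norm_num

lemma exists_c {r : ℕ} (R : Tsub r) (p : Nat.Primes) :
    ∃ c : ℤ, R.1.ψ p x3 = rep 0 ((p:ℤ)^r) c := by
  obtain ⟨c, hc⟩ := mem_span_x3sq.mp (R.2 p)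
  refine ⟨c, ?_⟩
  have := sub_eq_iff_eq_add.mp hc
  rw [this, prx_rep, rep_add]
  norm_num

def cP {r : ℕ} (R : Tsub r) (p : Nat.Primes) : ℤ := Classical.choose (exists_c R p)

lemma cP_spec {r : ℕ} (R : Tsub r) (p : Nat.Primes) :
    R.1.ψ p x3 = rep 0 ((p:ℤ)^r) (cP R p) := Classical.choose_spec (exists_c R p)

def θ {r : ℕ} (R : Tsub r) : ℤ := cP R P2

lemma P2_coe : ((P2 : ℕ) : ℤ) = 2 := rfl

lemma cP_comm {r : ℕ} (R : Tsub r) (p q : Nat.Primes) :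
    (q:ℤ)^r * cP R p + cP R q * ((p:ℤ)^r)^2
      = (p:ℤ)^r * cP R q + cP R p * ((q:ℤ)^r)^2 := by
  have h := RingHom.congr_fun (R.1.comm p q) x3
  simp only [RingHom.comp_apply] at h
  rw [cP_spec R q, hom_rep (cP_spec R p), cP_spec R p, hom_rep (cP_spec R q)] at h
  obtain ⟨-, -, h3⟩ := rep_inj h
  linarith [h3]

lemma cP_eq {r : ℕ} (R : Tsub r) (p : Nat.Primes) :
    Dd r * cP R p = θ R * (((p:ℤ)^r)^2 - (p:ℤ)^r) := by
  have h := cP_comm R p P2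
  rw [show ((P2:ℕ):ℤ) = 2 from rfl] at h
  have hD : Dd r = ((2:ℤ)^r)^2 - 2^r := by
    rw [Dd, ← pow_mul, mul_comm r 2]
  rw [hD, θ]
  linarith [h]

lemma P2_pow : x3 ^ (P2 : ℕ) = rep 0 0 1 := by
  rw [show ((P2:ℕ)) = 2 from rfl, x3sq_rep]

lemma θ_odd {r : ℕ} (R : Tsub r) : Odd (θ R) := by
  have h := R.1.frob P2 x3
  rw [cP_spec R P2, P2_pow] at h
  have hc : ((P2 : ℕ) : TP 3) = (((2:ℤ)) : TP 3) := by push_cast; rfl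
  rw [hc, mem_span_int, rep_sub] at h
  obtain ⟨a, b, c, h⟩ := h
  obtain ⟨-, -, h3⟩ := rep_inj h
  refine ⟨c, ?_⟩
  show cP R P2 = 2 * c + 1
  omega

section FixR
variable {r : ℕ} (hr : r = 1 ∨ r = 2 ∨ r = 4)

def Efun (hr : r = 1 ∨ r = 2 ∨ r = 4) (p : Nat.Primes) : ℤ :=
  Classical.choose (exE hr (p : ℕ) p.2)

lemma r_pos {m : ℕ} (h : m = 1 ∨ m = 2 ∨ m = 4) : 0 < m := by
  rcases h with rfl | rfl | rfl <;> norm_num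

lemma Efun_spec (p : Nat.Primes) :
    Dd r * Efun hr p = (((p:ℤ))^r)^2 - (p:ℤ)^r := by
  have h : Dd r * Efun hr p = ((p:ℕ):ℤ)^(2*r) - ((p:ℕ):ℤ)^r :=
    (Classical.choose_spec (exE hr (p : ℕ) p.2)).1
  rw [h, show ((p:ℕ):ℤ)^(2*r) = (((p:ℕ):ℤ)^r)^2 from by rw [← pow_mul, mul_comm]]

lemma Efun_two (p : Nat.Primes) (h2 : (p : ℕ) = 2) : Efun hr p = 1 :=
  (Classical.choose_spec (exE hr (p : ℕ) p.2)).2.1 h2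

lemma Efun_odd (p : Nat.Primes) (h2 : (p : ℕ) ≠ 2) : ((p:ℕ):ℤ) ∣ Efun hr p :=
  (Classical.choose_spec (exE hr (p : ℕ) p.2)).2.2 h2

def famψ (k : ℤ) (p : Nat.Primes) : TP 3 →+* TP 3 :=
  lift3 (rep 0 ((p:ℤ)^r) (k * Efun hr p)) (cube_zero _ _)

lemma famψ_x (k : ℤ) (p : Nat.Primes) :
    famψ hr k p x3 = rep 0 ((p:ℤ)^r) (k * Efun hr p) := lift3_x _ _

def Fam (k : ℤ) (hk : Odd k) : AdamsFamily 3 where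
  ψ := famψ hr k
  maps_ideal := by
    intro p a ha
    obtain ⟨b, c, rfl⟩ := mem_span_x3.mp ha
    rw [hom_rep (famψ_x hr k p)]
    exact mem_span_x3.mpr ⟨_, _, rfl⟩
  comm := by
    intro p q
    apply hom_ext
    simp only [RingHom.comp_apply]
    rw [famψ_x, hom_rep (famψ_x hr k p), famψ_x, hom_rep (famψ_x hr k q)]
    have h3 : (q:ℤ)^r * (k * Efun hr p) + k * Efun hr q * ((p:ℤ)^r)^2
        = (p:ℤ)^r * (k * Efun hr q) + k * Efun hr p * ((q:ℤ)^r)^2 := by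
      have e1 := Efun_spec hr p
      have e2 := Efun_spec hr q
      linear_combination k * Efun hr p * e2 - k * Efun hr q * e1
    rw [h3, mul_comm ((q:ℤ)^r) ((p:ℤ)^r)]
  frob := by
    intro p
    apply frob_iff _ p.2
    rcases eq_or_ne (p : ℕ) 2 with h2 | h2
    · -- p = 2
      have hx : famψ hr k p x3 = rep 0 ((2:ℤ)^r) (k * 1) := by
        rw [famψ_x, Efun_two hr p h2, h2]; push_cast; rfl
      obtain ⟨m, hm⟩ := hk
      have hxp : x3 ^ (p:ℕ) = rep 0 0 1 := by rw [h2, x3sq_rep]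
      rw [hx, hxp, rep_sub]
      have hc : ((p : ℕ) : TP 3) = (((2:ℤ)) : TP 3) := by rw [h2]; push_cast; rfl
      rw [hc, mem_span_int]
      refine ⟨0, 2^(r-1), m, ?_⟩
      have h2r : (2:ℤ)^r = 2 * 2^(r-1) := by
        conv_lhs => rw [show r = (r-1) + 1 by omega]
        ring
      exact rep_congr (by ring) (by rw [h2r]; ring) (by omega)
    · -- p odd
      have hp3 : 3 ≤ (p : ℕ) := by
        have := p.2.two_le
        omega
      obtain ⟨t, ht⟩ := Efun_odd hr p h2
      have hxp : x3 ^ (p:ℕ) = 0 := by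
        rw [show (p:ℕ) = 3 + ((p:ℕ) - 3) by omega, pow_add, x3_cube, zero_mul]
      rw [hxp, sub_zero, famψ_x, ht]
      have hc : ((p : ℕ) : TP 3) = ((((p:ℕ):ℤ)) : TP 3) := by push_cast; rfl
      rw [hc, mem_span_int]
      refine ⟨0, ((p:ℕ):ℤ)^(r-1), k*t, rep_congr (by ring) ?_ (by ring)⟩
      have hrp := r_pos hr
      conv_lhs => rw [show r = (r-1) + 1 by omega]
      ring

lemma Fam_mem (k : ℤ) (hk : Odd k) : ∀ p : Nat.Primes,
    (Fam hr k hk).ψ p (xx 3) - ((p : ℕ) : TP 3) ^ r * xx 3 ∈ Ideal.span {xx 3 ^ 2} := by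
  intro p
  show famψ hr k p x3 - _ ∈ _
  rw [famψ_x, prx_rep, rep_sub]
  exact mem_span_x3sq.mpr ⟨k * Efun hr p, rep_congr (by ring) (by ring) (by ring)⟩

def FamT (k : ℤ) (hk : Odd k) : Tsub r := ⟨Fam hr k hk, Fam_mem hr k hk⟩

lemma θ_FamT (k : ℤ) (hk : Odd k) : θ (FamT hr k hk) = k := by
  have h1 : (FamT hr k hk).1.ψ P2 x3 = rep 0 ((2:ℤ)^r) (k * 1) := by
    show famψ hr k P2 x3 = _
    rw [famψ_x, Efun_two hr P2 rfl]
    exact rep_congr rfl (by rw [show ((P2:ℕ):ℤ) = 2 from rfl]) rfl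
  have h2 := cP_spec (FamT hr k hk) P2
  rw [h1, show ((P2:ℕ):ℤ) = 2 from rfl] at h2
  have := (rep_inj h2).2.2
  show cP (FamT hr k hk) P2 = k
  omega

end FixR

section FixR2
variable {r : ℕ}

/-- build an isomorphism from the relation on `θ` -/
lemma iso_of (hr : r = 1 ∨ r = 2 ∨ r = 4) (R S : Tsub r) (a f : ℤ) (ha : a * a = 1)
    (h : θ S = a * θ R - Dd r * f) : AdamsIso R.1 S.1 := by
  set e : ℤ := a * f with he
  have ha' : a = 1 ∨ a = -1 := Int.isUnit_iff.mp (IsUnit.of_mul_eq_one (a := a) a ha)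
  set σh : TP 3 →+* TP 3 := lift3 (rep 0 a e) (cube_zero _ _) with hσh
  set τh : TP 3 →+* TP 3 := lift3 (rep 0 a (-(a*e))) (cube_zero _ _) with hτh
  have hσx : σh x3 = rep 0 a e := lift3_x _ _
  have hτx : τh x3 = rep 0 a (-(a*e)) := lift3_x _ _
  have hτσ : τh.comp σh = RingHom.id (TP 3) := by
    apply hom_ext
    simp only [RingHom.comp_apply, RingHom.id_apply]
    rw [hσx, hom_rep hτx, x3_rep]
    exact rep_congr rfl (by linarith [ha]) (by rcases ha' with rfl | rfl <;> ring)
  have hστ : σh.comp τh = RingHom.id (TP 3) := by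
    apply hom_ext
    simp only [RingHom.comp_apply, RingHom.id_apply]
    rw [hτx, hom_rep hσx, x3_rep]
    exact rep_congr rfl (by linarith [ha]) (by rcases ha' with rfl | rfl <;> ring)
  refine ⟨RingEquiv.ofRingHom σh τh hστ hτσ, ?_, ?_⟩
  · have htr : (RingEquiv.ofRingHom σh τh hστ hτσ).toRingHom = σh := rfl
    rw [htr, Ideal.map_span, Set.image_singleton, hσx]
    apply le_antisymm
    · rw [Ideal.span_le, Set.singleton_subset_iff]
      exact mem_span_x3.mpr ⟨a, e, rfl⟩
    · rw [Ideal.span_le, Set.singleton_subset_iff]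
      rw [SetLike.mem_coe, Ideal.mem_span_singleton]
      refine ⟨rep a (-e) 0, ?_⟩
      rw [x3_rep, rep_mul]
      exact rep_congr (by ring) (by linarith [ha]) (by rcases ha' with rfl | rfl <;> ring)
  · intro p
    have htr : (RingEquiv.ofRingHom σh τh hστ hτσ).toRingHom = σh := rfl
    rw [htr]
    apply hom_ext
    simp only [RingHom.comp_apply]
    rw [cP_spec R p, hom_rep hσx, hσx, hom_rep (cP_spec S p)]
    have hD := Dd_ne hr
    have h1 := cP_eq R p
    have h2 := cP_eq S p
    refine rep_congr rfl (by ring) ?_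
    apply mul_left_cancel₀ hD
    rcases ha' with rfl | rfl
    · linear_combination h1 - h2 - ((((p:ℕ):ℤ))^r)^2 * h + (((p:ℕ):ℤ))^r * h
        - Dd r * (((((p:ℕ):ℤ))^r)^2 - (((p:ℕ):ℤ))^r) * he
    · linear_combination h1 + h2 + ((((p:ℕ):ℤ))^r)^2 * h - (((p:ℕ):ℤ))^r * h
        - Dd r * (((((p:ℕ):ℤ))^r)^2 - (((p:ℕ):ℤ))^r) * he
end FixR2

lemma iso_rel {r : ℕ} (R S : Tsub r) (h : AdamsIso R.1 S.1) :
    ∃ a f : ℤ, a * a = 1 ∧ θ S = a * θ R - Dd r * f := by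
  obtain ⟨σ, hmap, hcomm⟩ := h
  -- σ x3 ∈ (x3)
  have hσx_mem : σ.toRingHom x3 ∈ Ideal.span {x3} := by
    rw [← hmap]
    exact Ideal.mem_map_of_mem _ (Ideal.subset_span rfl)
  obtain ⟨b, e, hbe⟩ := mem_span_x3.mp hσx_mem
  -- σ⁻¹ x3 ∈ (x3)
  have hx_mem : x3 ∈ (Ideal.span {x3}).map σ.toRingHom := by
    rw [hmap]; exact Ideal.subset_span rfl
  obtain ⟨u, hu, hσu⟩ := (Ideal.mem_map_iff_of_surjective _ σ.surjective).mp hx_mem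
  obtain ⟨b', e', hbe'⟩ := mem_span_x3.mp hu
  -- composing
  have hcomp : x3 = rep 0 (b'*b) (b'*e + e'*b^2) := by
    have : σ.toRingHom (rep 0 b' e') = x3 := by rw [← hbe']; exact hσu
    rw [← this, hom_rep hbe]
  rw [x3_rep] at hcomp
  obtain ⟨-, hb1, -⟩ := rep_inj hcomp
  have hbu : b = 1 ∨ b = -1 :=
    Int.isUnit_iff.mp (IsUnit.of_mul_eq_one (a := b) b' (by linarith [hb1]))
  have hb2 : b * b = 1 := by rcases hbu with rfl | rfl <;> norm_num
  -- intertwining at P2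
  have h2 := RingHom.congr_fun (hcomm P2) x3
  simp only [RingHom.comp_apply] at h2
  rw [cP_spec R P2, hom_rep hbe, hbe, hom_rep (cP_spec S P2)] at h2
  obtain ⟨-, -, h3⟩ := rep_inj h2
  rw [show ((P2:ℕ):ℤ) = 2 from rfl] at h3
  -- h3 : 2^r * e + cP R P2 * b^2 = b * cP S P2 + e * (2^r)^2
  refine ⟨b, b*e, hb2, ?_⟩
  have hDd : Dd r = ((2:ℤ)^r)^2 - 2^r := by rw [Dd, ← pow_mul, mul_comm r 2]
  rw [hDd]
  show cP S P2 = b * cP R P2 - _ * (b*e)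
  rcases hbu with rfl | rfl <;> linarith [h3]

-- counting target
instance oddResSetoid (n : ℕ) : Setoid {z : ZMod n // z.val % 2 = 1} where
  r z w := z.1 = w.1 ∨ z.1 = -w.1
  iseqv := by
    constructor
    · intro z; left; rfl
    · rintro a b (h | h); · left; exact h.symm
      · right; rw [h, neg_neg]
    · rintro a b c (h | h) (h' | h')
      · left; exact h.trans h'
      · right; rw [h, h']
      · right; rw [h, h']
      · left; rw [h, h', neg_neg]

instance (n : ℕ) : DecidableRel ((· ≈ ·) : {z : ZMod n // z.val % 2 = 1} → _ → Prop) :=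
  fun _ _ => inferInstanceAs (Decidable (_ ∨ _))

def Dn (r : ℕ) : ℕ := 2^(2*r) - 2^r

lemma Dn_cast {r : ℕ} : ((Dn r : ℕ) : ℤ) = Dd r := by
  rw [Dn, Dd, Nat.cast_sub (Nat.pow_le_pow_right (by norm_num) (by omega))]
  push_cast; ring

lemma Dn_pos {r : ℕ} (hr : r = 1 ∨ r = 2 ∨ r = 4) : Dn r ≠ 0 := by
  rcases hr with rfl | rfl | rfl <;> norm_num [Dn]

lemma Dn_even {r : ℕ} (hr : r = 1 ∨ r = 2 ∨ r = 4) : 2 ∣ Dn r := by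
  rcases hr with rfl | rfl | rfl <;> norm_num [Dn]

lemma val_odd {n : ℕ} (hn2 : 2 ∣ n) (hn : n ≠ 0) {k : ℤ} (hk : Odd k) :
    (k : ZMod n).val % 2 = 1 := by
  haveI : NeZero n := ⟨hn⟩
  have h1 : (((k : ZMod n).val : ℕ) : ℤ) = k % n := ZMod.val_intCast k
  have h2 : (((k : ZMod n).val % 2 : ℕ) : ℤ) = ((k : ZMod n).val : ℤ) % 2 := by push_cast; ring_nf
  have h3 : (k % (n:ℤ)) % 2 = k % 2 := Int.emod_emod_of_dvd k (by exact_mod_cast hn2)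
  have h4 : k % 2 = 1 := Int.odd_iff.mp hk
  have : (((k : ZMod n).val % 2 : ℕ) : ℤ) = 1 := by rw [h2, h1, h3, h4]
  exact_mod_cast this

lemma zmod_eq_iff {n : ℕ} (a b : ℤ) :
    ((a : ZMod n) = (b : ZMod n)) ↔ (n:ℤ) ∣ a - b := by
  constructor
  · intro h
    have : ((a - b : ℤ) : ZMod n) = 0 := by push_cast; rw [h]; ring
    exact (ZMod.intCast_zmod_eq_zero_iff_dvd _ n).mp this
  · intro h
    have : ((a - b : ℤ) : ZMod n) = 0 := (ZMod.intCast_zmod_eq_zero_iff_dvd _ n).mpr h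
    push_cast at this
    linear_combination this

section Assemble
variable {r : ℕ}

lemma odd_val {n : ℕ} (z : {z : ZMod n // z.val % 2 = 1}) : Odd ((z.1.val : ℕ) : ℤ) := by
  rw [Int.odd_coe_nat, Nat.odd_iff]
  exact z.2

lemma cast_val_eq {n : ℕ} (hn : n ≠ 0) (z : ZMod n) : ((z.val : ℤ) : ZMod n) = z := by
  haveI : NeZero n := ⟨hn⟩
  push_cast
  exact ZMod.natCast_rightInverse z

def toQ (hr : r = 1 ∨ r = 2 ∨ r = 4) (R : Tsub r) : Quotient (oddResSetoid (Dn r)) :=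
  ⟦⟨((θ R : ℤ) : ZMod (Dn r)), val_odd (Dn_even hr) (Dn_pos hr) (θ_odd R)⟩⟧

lemma toQ_resp (hr : r = 1 ∨ r = 2 ∨ r = 4) (R S : Tsub r) (h : AdamsIso R.1 S.1) :
    toQ hr R = toQ hr S := by
  obtain ⟨a, f, ha, hθ⟩ := iso_rel R S h
  rcases Int.isUnit_iff.mp (IsUnit.of_mul_eq_one (a := a) a ha) with rfl | rfl
  · apply Quotient.sound
    left
    show ((θ R : ℤ) : ZMod (Dn r)) = ((θ S : ℤ) : ZMod (Dn r))
    rw [zmod_eq_iff, Dn_cast]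
    exact ⟨f, by linarith [hθ]⟩
  · apply Quotient.sound
    right
    show ((θ R : ℤ) : ZMod (Dn r)) = -((θ S : ℤ) : ZMod (Dn r))
    have : ((θ R : ℤ) : ZMod (Dn r)) = (((-(θ S) : ℤ)) : ZMod (Dn r)) := by
      rw [zmod_eq_iff, Dn_cast]
      exact ⟨-f, by linarith [hθ]⟩
    rw [this]; push_cast; ring

def fromQfun (hr : r = 1 ∨ r = 2 ∨ r = 4) (z : {z : ZMod (Dn r) // z.val % 2 = 1}) :
    Quot (fun R S : Tsub r => AdamsIso R.1 S.1) :=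
  Quot.mk _ (FamT hr ((z.1.val : ℕ) : ℤ) (odd_val z))

lemma fromQ_resp (hr : r = 1 ∨ r = 2 ∨ r = 4)
    (z w : {z : ZMod (Dn r) // z.val % 2 = 1}) (h : z ≈ w) :
    fromQfun hr z = fromQfun hr w := by
  apply Quot.sound
  have hcast : ∀ u : {z : ZMod (Dn r) // z.val % 2 = 1},
      (((u.1.val : ℕ) : ℤ) : ZMod (Dn r)) = u.1 := fun u => cast_val_eq (Dn_pos hr) u.1
  rcases h with h | h
  · -- z.1 = w.1
    obtain ⟨f, hf⟩ : (Dn r : ℤ) ∣ ((w.1.val : ℕ) : ℤ) - ((z.1.val : ℕ) : ℤ) := by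
      rw [← zmod_eq_iff, hcast, hcast, h]
    refine iso_of hr _ _ 1 (-f) (by norm_num) ?_
    rw [θ_FamT, θ_FamT, ← Dn_cast]
    linarith [hf]
  · -- z.1 = -w.1
    obtain ⟨f, hf⟩ : (Dn r : ℤ) ∣ ((w.1.val : ℕ) : ℤ) - (-((z.1.val : ℕ) : ℤ)) := by
      rw [← zmod_eq_iff, Int.cast_neg, hcast, hcast, h, neg_neg]
    refine iso_of hr _ _ (-1) (-f) (by norm_num) ?_
    rw [θ_FamT, θ_FamT, ← Dn_cast]
    linarith [hf]

def bigEquiv (hr : r = 1 ∨ r = 2 ∨ r = 4) :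
    Quot (fun R S : Tsub r => AdamsIso R.1 S.1) ≃ Quotient (oddResSetoid (Dn r)) where
  toFun := Quot.lift (toQ hr) (toQ_resp hr)
  invFun := Quotient.lift (fromQfun hr) (fromQ_resp hr)
  left_inv := by
    apply Quot.ind
    intro R
    show fromQfun hr _ = _
    apply Quot.sound
    set v : ℤ := (((θ R : ℤ) : ZMod (Dn r)).val : ℤ) with hv
    obtain ⟨f, hf⟩ : (Dn r : ℤ) ∣ θ R - v := by
      rw [← zmod_eq_iff, hv, cast_val_eq (Dn_pos hr)]
    refine iso_of hr _ _ 1 (-f) (by norm_num) ?_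
    rw [θ_FamT, ← Dn_cast]
    linarith [hf]
  right_inv := by
    apply Quotient.ind
    intro z
    show Quot.lift (toQ hr) (toQ_resp hr) (fromQfun hr z) = _
    unfold fromQfun toQ
    apply Quotient.sound
    left
    show ((θ (FamT hr _ _) : ℤ) : ZMod (Dn r)) = z.1
    rw [θ_FamT]
    exact cast_val_eq (Dn_pos hr) z.1

end Assemble

/-- The number of isomorphism classes of filtered λ-ring structures on `ℤ[x]/(x³)` whose
Adams operations satisfy `ψ p x ≡ p^r x (mod x²)` for all primes `p`. -/
def classCount (r : ℕ) : ℕ :=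
  Nat.card (Quot (fun (R S : {R : AdamsFamily 3 //
      ∀ p : Nat.Primes,
        R.ψ p (xx 3) - ((p : ℕ) : TP 3) ^ r * xx 3 ∈ Ideal.span {xx 3 ^ 2}}) =>
      AdamsIso R.1 S.1))

set_option maxRecDepth 40000 in
theorem stmt9 : classCount 1 = 1 ∧ classCount 2 = 3 ∧ classCount 4 = 60 := by
  have key : ∀ r : ℕ, r = 1 ∨ r = 2 ∨ r = 4 →
      classCount r = Nat.card (Quotient (oddResSetoid (Dn r))) := by
    intro r hr
    exact Nat.card_congr (bigEquiv hr)
  refine ⟨?_, ?_, ?_⟩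
  · rw [key 1 (by norm_num), show Dn 1 = 2 from by norm_num [Dn],
      Nat.card_eq_fintype_card]
    decide
  · rw [key 2 (by norm_num), show Dn 2 = 12 from by norm_num [Dn],
      Nat.card_eq_fintype_card]
    decide
  · rw [key 4 (by norm_num), show Dn 4 = 240 from by norm_num [Dn],
      Nat.card_eq_fintype_card]
    decide
end
end
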